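/- arXiv:2012.09423 — 7 statements merged into one kernel-verified Lean document; each statement's English description precedes it below -/
import Mathlib

section
/- Let γ_B, γ_F, P_B, P_F be positive real numbers, and set α_B = γ_B/P_B and τ(g) = g/α_B − 1. Then for every real g ≥ 0, the inequality τ(g)/P_F < (γ_F/P_F)·(P_B·g + 1) holds if and only if either γ_B·γ_F ≥ 1, or (γ_B·γ_F < 1 and g < α_B·(1+γ_F)/(1−γ_B·γ_F)). -/
/-- The "hidden constraint" (eq. (A.2)): for positive target SINRs `γB, γF` and powers
`PB, PF`, with `αB = γB / PB` and decoding threshold `τ g = g / αB - 1`, for every `g ≥ 0`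
the inequality `τ g / PF < (γF / PF) * (PB * g + 1)` holds iff `γB * γF ≥ 1`, or
`γB * γF < 1` and `g < αB * (1 + γF) / (1 - γB * γF)`. -/
theorem hidden_constraint (γB γF PB PF : ℝ) (hγB : 0 < γB) (hγF : 0 < γF)
    (hPB : 0 < PB) (hPF : 0 < PF) (αB : ℝ) (hαB : αB = γB / PB)
    (τ : ℝ → ℝ) (hτ : ∀ g, τ g = g / αB - 1) :
    ∀ g : ℝ, 0 ≤ g →
      (τ g / PF < (γF / PF) * (PB * g + 1) ↔
        1 ≤ γB * γF ∨ (γB * γF < 1 ∧ g < αB * (1 + γF) / (1 - γB * γF))) := by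
  intro g hg
  subst hαB
  rw [hτ, show (γF / PF) * (PB * g + 1) = (γF * (PB * g + 1)) / PF by ring,
    div_lt_div_iff_of_pos_right hPF]
  have key : g / (γB / PB) - 1 < γF * (PB * g + 1) ↔
      g * PB * (1 - γB * γF) < γB * (1 + γF) := by
    rw [div_div_eq_mul_div, div_sub' (ne_of_gt hγB), div_lt_iff₀ hγB]
    constructor <;> intro h <;> nlinarith
  rw [key]
  by_cases hc : 1 ≤ γB * γF
  · simp only [hc, true_or, iff_true]
    nlinarith [mul_nonneg hg hPB.le, mul_pos hγB hγF]
  · push_neg at hc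
    have hnc : ¬ (1 ≤ γB * γF) := not_le.mpr hc
    simp only [hnc, hc, false_or, true_and]
    have h1c : 0 < 1 - γB * γF := by linarith
    rw [lt_div_iff₀ h1c, div_mul_eq_mul_div, lt_div_iff₀ hPB]
    constructor <;> intro h <;> nlinarith
end

section
/- Let γ_B, γ_F, P_B, P_m be positive real numbers, and set α_B = γ_B/P_B, α_1 = α_B·(1+γ_F), and τ(g) = g/α_B − 1. Let g > 0 and h ≥ 0 be reals with g ≠ α_B, g ≠ α_1, P_m·h ≠ τ(g), and P_m·h ≠ (P_B·g + 1)·τ(g). Then the disjunction of the following four conditions: (i) g < α_B and P_m·h < γ_F·(P_B·g + 1); (ii) g > α_B and P_m·h < τ(g) and P_m·h < γ_F; (iii) g > α_B and P_m·h > τ(g) and P_m·h > (P_B·g + 1)·τ(g) and P_m·h < γ_F·(P_B·g + 1); (iv) g > α_B and P_m·h > τ(g) and P_m·h < (P_B·g + 1)·τ(g) and τ(g) < γ_F; holds if and only if either ( g < α_1 and P_m·h < γ_F·(P_B·g + 1) ) or ( g > α_1 and P_m·h < γ_F ). -/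
/-- Pointwise event simplification underlying Theorem 4 (from eq. (33) to eq. (41)):
with `αB = γB/PB`, `α1 = αB (1+γF)`, `τ g = g/αB - 1`, for `g > 0`, `h ≥ 0` avoiding the
boundary cases, the union of the four outage events Δ₁, Δ₃, Δ₄, Δ₅ equals
`(g < α1 ∧ Pm h < γF (PB g + 1)) ∨ (g > α1 ∧ Pm h < γF)`. -/
theorem cs_sgf_pc_event_simplification (γB γF PB Pm : ℝ) (hγB : 0 < γB) (hγF : 0 < γF)
    (hPB : 0 < PB) (hPm : 0 < Pm) (αB α1 : ℝ) (hαB : αB = γB / PB)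
    (hα1 : α1 = αB * (1 + γF)) (τ : ℝ → ℝ) (hτ : ∀ g, τ g = g / αB - 1)
    (g h : ℝ) (hg : 0 < g) (hh : 0 ≤ h) (hg1 : g ≠ αB) (hg2 : g ≠ α1)
    (hb1 : Pm * h ≠ τ g) (hb2 : Pm * h ≠ (PB * g + 1) * τ g) :
    ((g < αB ∧ Pm * h < γF * (PB * g + 1)) ∨
      (g > αB ∧ Pm * h < τ g ∧ Pm * h < γF) ∨
      (g > αB ∧ Pm * h > τ g ∧ Pm * h > (PB * g + 1) * τ g ∧
        Pm * h < γF * (PB * g + 1)) ∨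
      (g > αB ∧ Pm * h > τ g ∧ Pm * h < (PB * g + 1) * τ g ∧ τ g < γF)) ↔
      ((g < α1 ∧ Pm * h < γF * (PB * g + 1)) ∨ (g > α1 ∧ Pm * h < γF)) := by
  have hαBpos : 0 < αB := hαB ▸ div_pos hγB hPB
  set x := Pm * h with hx
  have hx0 : 0 ≤ x := mul_nonneg hPm.le hh
  set t := τ g with ht
  have htdef : t = g / αB - 1 := hτ g
  have hA : (1:ℝ) < PB * g + 1 := by nlinarith
  -- t < γF ↔ g < α1
  have key1 : t < γF ↔ g < α1 := by
    rw [htdef, hα1, sub_lt_iff_lt_add, div_lt_iff₀ hαBpos]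
    constructor <;> intro H <;> nlinarith
  have key2 : γF < t ↔ α1 < g := by
    rw [htdef, hα1, lt_sub_iff_add_lt, lt_div_iff₀ hαBpos]
    constructor <;> intro H <;> nlinarith
  -- g > αB ↔ t > 0, g < αB ↔ t < 0
  have key3 : 0 < t ↔ αB < g := by
    rw [htdef, sub_pos, lt_div_iff₀ hαBpos]
    constructor <;> intro H <;> nlinarith
  have key4 : t < 0 ↔ g < αB := by
    rw [htdef, sub_neg, div_lt_iff₀ hαBpos]
    constructor <;> intro H <;> nlinarith
  constructor
  · rintro (⟨h1, h2⟩ | ⟨h1, h2, h3⟩ | ⟨h1, h2, h3, h4⟩ | ⟨h1, h2, h3, h4⟩)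
    · left
      refine ⟨?_, h2⟩
      have : g < αB * (1 + γF) := by nlinarith
      rw [hα1]; exact this
    · -- (ii)
      have ht0 : 0 < t := key3.mpr h1
      rcases lt_or_gt_of_ne hg2 with hlt | hgt
      · left
        refine ⟨hlt, ?_⟩
        nlinarith
      · right; exact ⟨hgt, h3⟩
    · -- (iii)
      left
      refine ⟨?_, h4⟩
      by_contra hc
      push_neg at hc
      have : α1 < g := lt_of_le_of_ne hc (Ne.symm hg2)
      have hγt : γF < t := key2.mpr this
      nlinarith
    · -- (iv)
      left
      refine ⟨key1.mp h4, ?_⟩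
      nlinarith
  · rintro (⟨h1, h2⟩ | ⟨h1, h2⟩)
    · have htγ : t < γF := key1.mpr h1
      rcases lt_or_gt_of_ne hg1 with hlt | hgt
      · exact Or.inl ⟨hlt, h2⟩
      · have ht0 : 0 < t := key3.mpr hgt
        rcases lt_or_gt_of_ne hb1 with hxt | hxt
        · right; left
          exact ⟨hgt, hxt, by nlinarith⟩
        · rcases lt_or_gt_of_ne hb2 with hxa | hxa
          · right; right; right
            exact ⟨hgt, hxt, hxa, htγ⟩
          · right; right; left
            exact ⟨hgt, hxt, hxa, h2⟩
    · have hγt : γF < t := key2.mpr h1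
      have ht0 : 0 < t := hγF.trans hγt
      have hgB : αB < g := key3.mp ht0
      exact Or.inr (Or.inl ⟨hgB, by linarith, h2⟩)
end

section
/- Let γ_B, γ_F, P_B, P_m be positive real numbers, and set α_B = γ_B/P_B, α_1 = α_B·(1+γ_F), and τ(g) = g/α_B − 1. Let G and H be independent real-valued random variables on a probability space, each almost surely positive and each with an atomless distribution. Then P(G < α_B and P_m·H < γ_F·(P_B·G+1)) + P(G > α_B and P_m·H < τ(G) and P_m·H < γ_F) + P(G > α_B and P_m·H > τ(G) and P_m·H > (P_B·G+1)·τ(G) and P_m·H < γ_F·(P_B·G+1)) + P(G > α_B and P_m·H > τ(G) and P_m·H < (P_B·G+1)·τ(G) and τ(G) < γ_F) = P(G < α_1 and P_m·H < γ_F·(P_B·G+1)) + P(G > α_1 and P_m·H < γ_F). -/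
open MeasureTheory ProbabilityTheory

set_option maxHeartbeats 1000000

lemma graph_null {Ω : Type*} [MeasureSpace Ω] [IsProbabilityMeasure (ℙ : Measure Ω)]
    (G H : Ω → ℝ) (hG : Measurable G) (hH : Measurable H)
    (hind : IndepFun G H ℙ) (hat : NoAtoms (Measure.map H ℙ))
    (f : ℝ → ℝ) (hf : Measurable f) : ℙ {ω | H ω = f (G ω)} = 0 := by
  have hmap : Measure.map (fun ω => (G ω, H ω)) ℙ
      = (Measure.map G ℙ).prod (Measure.map H ℙ) :=
    (indepFun_iff_map_prod_eq_prod_map_map hG.aemeasurable hH.aemeasurable).mp hind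
  have hS : MeasurableSet {p : ℝ × ℝ | p.2 = f p.1} :=
    measurableSet_eq_fun measurable_snd (hf.comp measurable_fst)
  have hpre : {ω | H ω = f (G ω)} = (fun ω => (G ω, H ω)) ⁻¹' {p : ℝ × ℝ | p.2 = f p.1} := rfl
  haveI : IsProbabilityMeasure (Measure.map G ℙ) := Measure.isProbabilityMeasure_map hG.aemeasurable
  haveI : IsProbabilityMeasure (Measure.map H ℙ) := Measure.isProbabilityMeasure_map hH.aemeasurable
  rw [hpre, ← Measure.map_apply (hG.prodMk hH) hS, hmap, Measure.prod_apply hS]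
  have h0 : ∀ g : ℝ, (Measure.map H ℙ) (Prod.mk g ⁻¹' {p : ℝ × ℝ | p.2 = f p.1}) = 0 := by
    intro g
    have : Prod.mk g ⁻¹' {p : ℝ × ℝ | p.2 = f p.1} = {f g} := by
      ext h; simp [Set.mem_singleton_iff]
    rw [this]; exact (hat : NullSingletonClass _).measure_singleton _
  simp only [h0]; simp

lemma key_iff (γF PB αB α1 : ℝ) (hγF : 0 < γF) (hPB : 0 < PB) (hαB : 0 < αB)
    (hα1 : α1 = αB * (1 + γF)) (g x : ℝ)
    (hg1 : g ≠ αB) (hg2 : g ≠ α1)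
    (hx1 : x ≠ g / αB - 1) (hx2 : x ≠ (PB * g + 1) * (g / αB - 1)) :
    ((g < αB ∧ x < γF * (PB * g + 1)) ∨
     (αB < g ∧ x < g / αB - 1 ∧ x < γF) ∨
     (αB < g ∧ g / αB - 1 < x ∧ (PB * g + 1) * (g / αB - 1) < x ∧ x < γF * (PB * g + 1)) ∨
     (αB < g ∧ g / αB - 1 < x ∧ x < (PB * g + 1) * (g / αB - 1) ∧ g / αB - 1 < γF)) ↔
    ((g < α1 ∧ x < γF * (PB * g + 1)) ∨ (α1 < g ∧ x < γF)) := by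
  have hB1 : αB < α1 := by nlinarith
  have hiff0 : αB < g ↔ 0 < g / αB - 1 := by
    rw [sub_pos, lt_div_iff₀ hαB, one_mul]
  have hiff2 : g < α1 ↔ g / αB - 1 < γF := by
    rw [hα1, sub_lt_iff_lt_add, div_lt_iff₀ hαB]
    constructor <;> intro h <;> nlinarith
  have hiff3 : α1 < g ↔ γF < g / αB - 1 := by
    rw [hα1, lt_sub_iff_add_lt, lt_div_iff₀ hαB]
    constructor <;> intro h <;> nlinarith
  set t := g / αB - 1 with htdef
  constructor
  · rintro (⟨h1, h2⟩ | ⟨h1, h2, h3⟩ | ⟨h1, h2, h3, h4⟩ | ⟨h1, h2, h3, h4⟩)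
    · exact Or.inl ⟨lt_trans h1 hB1, h2⟩
    · rcases lt_or_gt_of_ne hg2 with hg | hg
      · refine Or.inl ⟨hg, ?_⟩
        have hgpos : 0 < g := lt_trans hαB h1
        nlinarith [mul_pos (mul_pos hγF hPB) hgpos]
      · exact Or.inr ⟨hg, h3⟩
    · refine Or.inl ⟨?_, h4⟩
      rcases lt_or_gt_of_ne hg2 with hg | hg
      · exact hg
      · exfalso
        have ht : γF < t := hiff3.mp hg
        have hgpos : 0 < g := lt_trans hαB h1
        have hc : 0 < PB * g + 1 := by nlinarith
        nlinarith [mul_lt_mul_of_pos_left ht hc]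
    · refine Or.inl ⟨hiff2.mpr h4, ?_⟩
      have hgpos : 0 < g := lt_trans hαB h1
      have ht0 : 0 < t := hiff0.mp h1
      have hc : 0 < PB * g + 1 := by nlinarith
      nlinarith [mul_lt_mul_of_pos_left h4 hc]
  · rintro (⟨h1, h2⟩ | ⟨h1, h2⟩)
    · rcases lt_or_gt_of_ne hg1 with hg | hg
      · exact Or.inl ⟨hg, h2⟩
      · have ht0 : 0 < t := hiff0.mp hg
        have htγ : t < γF := hiff2.mp h1
        have hgpos : 0 < g := lt_trans hαB hg
        rcases lt_or_gt_of_ne hx1 with hx | hx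
        · exact Or.inr (Or.inl ⟨hg, hx, lt_trans hx htγ⟩)
        · rcases lt_or_gt_of_ne hx2 with hx' | hx'
          · exact Or.inr (Or.inr (Or.inr ⟨hg, hx, hx', htγ⟩))
          · exact Or.inr (Or.inr (Or.inl ⟨hg, hx, hx', h2⟩))
    · have hg : αB < g := lt_trans hB1 h1
      have ht : γF < t := hiff3.mp h1
      exact Or.inr (Or.inl ⟨hg, lt_trans h2 ht, h2⟩)

/-- Exact simplification of the CS-SGF-PC outage probability (eq. (33) to eq. (41)):
for independent, almost surely positive random variables `G`, `H` with atomless laws,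
`Δ₁ + Δ₃ + Δ₄ + Δ₅ = P(G < α1, Pm H < γF (PB G + 1)) + P(G > α1, Pm H < γF)`. -/
theorem cs_sgf_pc_outage_simplification {Ω : Type*} [MeasureSpace Ω]
    [IsProbabilityMeasure (ℙ : Measure Ω)] (γB γF PB Pm : ℝ)
    (hγB : 0 < γB) (hγF : 0 < γF) (hPB : 0 < PB) (hPm : 0 < Pm)
    (αB α1 : ℝ) (hαB : αB = γB / PB) (hα1 : α1 = αB * (1 + γF))
    (τ : ℝ → ℝ) (hτ : ∀ g, τ g = g / αB - 1)
    (G H : Ω → ℝ) (hGmeas : Measurable G) (hHmeas : Measurable H)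
    (hind : IndepFun G H ℙ)
    (hGpos : ∀ᵐ ω ∂(ℙ : Measure Ω), 0 < G ω)
    (hHpos : ∀ᵐ ω ∂(ℙ : Measure Ω), 0 < H ω)
    (hGatomless : NoAtoms (Measure.map G ℙ)) (hHatomless : NoAtoms (Measure.map H ℙ)) :
    (ℙ {ω | G ω < αB ∧ Pm * H ω < γF * (PB * G ω + 1)}).toReal +
      (ℙ {ω | G ω > αB ∧ Pm * H ω < τ (G ω) ∧ Pm * H ω < γF}).toReal +
      (ℙ {ω | G ω > αB ∧ Pm * H ω > τ (G ω) ∧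
        Pm * H ω > (PB * G ω + 1) * τ (G ω) ∧
        Pm * H ω < γF * (PB * G ω + 1)}).toReal +
      (ℙ {ω | G ω > αB ∧ Pm * H ω > τ (G ω) ∧
        Pm * H ω < (PB * G ω + 1) * τ (G ω) ∧ τ (G ω) < γF}).toReal =
      (ℙ {ω | G ω < α1 ∧ Pm * H ω < γF * (PB * G ω + 1)}).toReal +
        (ℙ {ω | G ω > α1 ∧ Pm * H ω < γF}).toReal := by
  have hαBpos : 0 < αB := by rw [hαB]; positivity
  simp only [hτ]
  set A1 : Set Ω := {ω | G ω < αB ∧ Pm * H ω < γF * (PB * G ω + 1)} with hA1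
  set A3 : Set Ω := {ω | G ω > αB ∧ Pm * H ω < G ω / αB - 1 ∧ Pm * H ω < γF} with hA3
  set A4 : Set Ω := {ω | G ω > αB ∧ Pm * H ω > G ω / αB - 1 ∧
      Pm * H ω > (PB * G ω + 1) * (G ω / αB - 1) ∧
      Pm * H ω < γF * (PB * G ω + 1)} with hA4
  set A5 : Set Ω := {ω | G ω > αB ∧ Pm * H ω > G ω / αB - 1 ∧
      Pm * H ω < (PB * G ω + 1) * (G ω / αB - 1) ∧ G ω / αB - 1 < γF} with hA5
  set B1 : Set Ω := {ω | G ω < α1 ∧ Pm * H ω < γF * (PB * G ω + 1)} with hB1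
  set B2 : Set Ω := {ω | G ω > α1 ∧ Pm * H ω < γF} with hB2
  -- measurability
  have hx : Measurable fun ω => Pm * H ω := measurable_const.mul hHmeas
  have hc : Measurable fun ω => γF * (PB * G ω + 1) :=
    measurable_const.mul ((measurable_const.mul hGmeas).add measurable_const)
  have ht : Measurable fun ω => G ω / αB - 1 := (hGmeas.div_const αB).sub measurable_const
  have hct : Measurable fun ω => (PB * G ω + 1) * (G ω / αB - 1) :=
    ((measurable_const.mul hGmeas).add measurable_const).mul ht
  have mA1 : MeasurableSet A1 :=
    (measurableSet_lt hGmeas measurable_const).inter (measurableSet_lt hx hc)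
  have mA3 : MeasurableSet A3 :=
    (measurableSet_lt measurable_const hGmeas).inter
      ((measurableSet_lt hx ht).inter (measurableSet_lt hx measurable_const))
  have mA4 : MeasurableSet A4 :=
    (measurableSet_lt measurable_const hGmeas).inter
      ((measurableSet_lt ht hx).inter
        ((measurableSet_lt hct hx).inter (measurableSet_lt hx hc)))
  have mA5 : MeasurableSet A5 :=
    (measurableSet_lt measurable_const hGmeas).inter
      ((measurableSet_lt ht hx).inter
        ((measurableSet_lt hx hct).inter (measurableSet_lt ht measurable_const)))
  have mB2 : MeasurableSet B2 :=
    (measurableSet_lt measurable_const hGmeas).inter (measurableSet_lt hx measurable_const)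
  -- null boundary set
  have hN1 : ℙ {ω | G ω = αB} = 0 := by
    have : {ω | G ω = αB} = G ⁻¹' {αB} := rfl
    rw [this, ← Measure.map_apply hGmeas (measurableSet_singleton _)]
    exact (hGatomless : NullSingletonClass _).measure_singleton _
  have hN2 : ℙ {ω | G ω = α1} = 0 := by
    have : {ω | G ω = α1} = G ⁻¹' {α1} := rfl
    rw [this, ← Measure.map_apply hGmeas (measurableSet_singleton _)]
    exact (hGatomless : NullSingletonClass _).measure_singleton _
  have hN3 : ℙ {ω | Pm * H ω = G ω / αB - 1} = 0 := by
    have heq : {ω | Pm * H ω = G ω / αB - 1}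
        = {ω | H ω = (fun g => (g / αB - 1) / Pm) (G ω)} := by
      ext ω
      simp only [Set.mem_setOf_eq]
      rw [eq_div_iff hPm.ne', mul_comm]
    rw [heq]
    exact graph_null G H hGmeas hHmeas hind hHatomless _
      (((measurable_id.div_const αB).sub measurable_const).div_const Pm)
  have hN4 : ℙ {ω | Pm * H ω = (PB * G ω + 1) * (G ω / αB - 1)} = 0 := by
    have heq : {ω | Pm * H ω = (PB * G ω + 1) * (G ω / αB - 1)}
        = {ω | H ω = (fun g => ((PB * g + 1) * (g / αB - 1)) / Pm) (G ω)} := by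
      ext ω
      simp only [Set.mem_setOf_eq]
      rw [eq_div_iff hPm.ne', mul_comm]
    rw [heq]
    exact graph_null G H hGmeas hHmeas hind hHatomless _
      ((((measurable_const.mul measurable_id).add measurable_const).mul
        ((measurable_id.div_const αB).sub measurable_const)).div_const Pm)
  set N : Set Ω := {ω | G ω = αB} ∪ {ω | G ω = α1} ∪ {ω | Pm * H ω = G ω / αB - 1}
      ∪ {ω | Pm * H ω = (PB * G ω + 1) * (G ω / αB - 1)} with hNdef
  have hN : ℙ N = 0 := by
    rw [hNdef]
    refine measure_union_null (measure_union_null (measure_union_null hN1 hN2) hN3) hN4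
  -- a.e. equality of the unions
  have hLR : ℙ (A1 ∪ A3 ∪ A4 ∪ A5) = ℙ (B1 ∪ B2) := by
    apply measure_congr
    rw [MeasureTheory.ae_eq_set]
    constructor
    · refine measure_mono_null ?_ hN
      intro ω hω
      by_contra hn
      rw [hNdef] at hn
      simp only [Set.mem_union, Set.mem_setOf_eq, not_or] at hn
      obtain ⟨⟨⟨hn1, hn2⟩, hn3⟩, hn4⟩ := hn
      apply hω.2
      have hk := (key_iff γF PB αB α1 hγF hPB hαBpos hα1 (G ω) (Pm * H ω)
        hn1 hn2 hn3 hn4).mp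
      have hmem := hω.1
      simp only [Set.mem_union, hA1, hA3, hA4, hA5, Set.mem_setOf_eq] at hmem
      simp only [Set.mem_union, hB1, hB2, Set.mem_setOf_eq]
      rcases hmem with ((h | h) | h) | h
      · exact hk (Or.inl h)
      · exact hk (Or.inr (Or.inl h))
      · exact hk (Or.inr (Or.inr (Or.inl h)))
      · exact hk (Or.inr (Or.inr (Or.inr h)))
    · refine measure_mono_null ?_ hN
      intro ω hω
      by_contra hn
      rw [hNdef] at hn
      simp only [Set.mem_union, Set.mem_setOf_eq, not_or] at hn
      obtain ⟨⟨⟨hn1, hn2⟩, hn3⟩, hn4⟩ := hn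
      apply hω.2
      have hk := (key_iff γF PB αB α1 hγF hPB hαBpos hα1 (G ω) (Pm * H ω)
        hn1 hn2 hn3 hn4).mpr
      have hmem := hω.1
      simp only [Set.mem_union, hB1, hB2, Set.mem_setOf_eq] at hmem
      simp only [Set.mem_union, hA1, hA3, hA4, hA5, Set.mem_setOf_eq]
      rcases hk hmem with h | h | h | h
      · exact Or.inl (Or.inl (Or.inl h))
      · exact Or.inl (Or.inl (Or.inr h))
      · exact Or.inl (Or.inr h)
      · exact Or.inr h
  -- disjointness
  have d13 : Disjoint A1 A3 := by
    rw [Set.disjoint_left]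
    rintro ω ⟨h1, _⟩ ⟨h2, _⟩
    exact absurd (lt_trans h1 h2) (lt_irrefl _)
  have d14 : Disjoint A1 A4 := by
    rw [Set.disjoint_left]
    rintro ω ⟨h1, _⟩ ⟨h2, _⟩
    exact absurd (lt_trans h1 h2) (lt_irrefl _)
  have d15 : Disjoint A1 A5 := by
    rw [Set.disjoint_left]
    rintro ω ⟨h1, _⟩ ⟨h2, _⟩
    exact absurd (lt_trans h1 h2) (lt_irrefl _)
  have d34 : Disjoint A3 A4 := by
    rw [Set.disjoint_left]
    rintro ω ⟨_, h1, _⟩ ⟨_, h2, _⟩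
    exact absurd (lt_trans h1 h2) (lt_irrefl _)
  have d35 : Disjoint A3 A5 := by
    rw [Set.disjoint_left]
    rintro ω ⟨_, h1, _⟩ ⟨_, h2, _⟩
    exact absurd (lt_trans h1 h2) (lt_irrefl _)
  have d45 : Disjoint A4 A5 := by
    rw [Set.disjoint_left]
    rintro ω ⟨_, _, h1, _⟩ ⟨_, _, h2, _⟩
    exact absurd (lt_trans h1 h2) (lt_irrefl _)
  have dB : Disjoint B1 B2 := by
    rw [Set.disjoint_left]
    rintro ω ⟨h1, _⟩ ⟨h2, _⟩
    exact absurd (lt_trans h1 h2) (lt_irrefl _)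
  have E : ℙ A1 + ℙ A3 + ℙ A4 + ℙ A5 = ℙ B1 + ℙ B2 := by
    rw [← measure_union dB mB2, ← hLR, measure_union ((d15.union_left d35).union_left d45) mA5,
      measure_union (d14.union_left d34) mA4, measure_union d13 mA3]
  have fin : ∀ s : Set Ω, ℙ s ≠ ⊤ := fun s => measure_ne_top _ _
  rw [← ENNReal.toReal_add (fin A1) (fin A3),
    ← ENNReal.toReal_add (ENNReal.add_ne_top.2 ⟨fin A1, fin A3⟩) (fin A4),
    ← ENNReal.toReal_add
      (ENNReal.add_ne_top.2 ⟨ENNReal.add_ne_top.2 ⟨fin A1, fin A3⟩, fin A4⟩) (fin A5),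
    ← ENNReal.toReal_add (fin B1) (fin B2), E]
end

section
/- Let D > 0, α > 0 and let K ≥ 1 be a natural number. Define Φ_K(x) = (2/D²)·∫_0^D (1 − exp(−(1+r^α)·x))^K·r dr for x ≥ 0. Then: (i) (2/D²)·∫_0^D (1+r^α)^K·r dr = Σ_{j=0}^{K} C(K,j)·2·D^{j·α}/(j·α + 2), where C(K,j) is the binomial coefficient; and (ii) lim_{x→0⁺} Φ_K(x)/x^K = (2/D²)·∫_0^D (1+r^α)^K·r dr. -/
open Real Filter Finset


-- pointwise exp bounds
lemma exp_bd (u : ℝ) (hu : 0 ≤ u) :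
    u * Real.exp (-u) ≤ 1 - Real.exp (-u) ∧ 1 - Real.exp (-u) ≤ u := by
  constructor
  · have h1 := Real.add_one_le_exp u
    have h2 : Real.exp (-u) * Real.exp u = 1 := by
      rw [← Real.exp_add]; simp
    nlinarith [Real.exp_pos (-u)]
  · have h1 := Real.add_one_le_exp (-u)
    linarith

/-- Small-argument asymptotics of the CDF-scheduled channel-gain CDF (eq. (B.1)):
with `Φ_K(x) = (2/D²) ∫_0^D (1 - e^{-(1+r^α) x})^K r dr`,
(i) `(2/D²) ∫_0^D (1+r^α)^K r dr = Σ_{j=0}^K C(K,j) 2 D^{jα}/(jα+2)`, and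
(ii) `Φ_K(x)/x^K → (2/D²) ∫_0^D (1+r^α)^K r dr` as `x → 0⁺`. -/
theorem cdf_scheduling_small_x_asymptotics (D α : ℝ) (hD : 0 < D) (hα : 0 < α)
    (K : ℕ) (hK : 1 ≤ K) (Φ : ℝ → ℝ)
    (hΦ : ∀ x, Φ x = (2 / D ^ 2) *
      ∫ r in (0:ℝ)..D, (1 - Real.exp (-(1 + r ^ α) * x)) ^ K * r) :
    ((2 / D ^ 2) * ∫ r in (0:ℝ)..D, (1 + r ^ α) ^ K * r =
        ∑ j ∈ Finset.range (K + 1),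
          (K.choose j : ℝ) * 2 * D ^ ((j : ℝ) * α) / ((j : ℝ) * α + 2)) ∧
      Filter.Tendsto (fun x => Φ x / x ^ K) (nhdsWithin 0 (Set.Ioi 0))
        (nhds ((2 / D ^ 2) * ∫ r in (0:ℝ)..D, (1 + r ^ α) ^ K * r)) := by
  constructor
  ·   have hD2 : (D:ℝ) ^ (2:ℕ) ≠ 0 := pow_ne_zero _ hD.ne'
      have key : ∫ r in (0:ℝ)..D, (1 + r ^ α) ^ K * r
          = ∑ j ∈ Finset.range (K + 1),
            (K.choose j : ℝ) * (D ^ ((j : ℝ) * α + 2) / ((j : ℝ) * α + 2)) := by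
        have hcong : Set.EqOn (fun r : ℝ => (1 + r ^ α) ^ K * r)
            (fun r : ℝ => ∑ j ∈ Finset.range (K + 1),
              (K.choose j : ℝ) * r ^ ((j : ℝ) * α + 1)) (Set.uIcc 0 D) := by
          intro r hr
          rw [Set.uIcc_of_le hD.le] at hr
          have hr0 : (0:ℝ) ≤ r := hr.1
          simp only
          rw [add_comm (1:ℝ) (r ^ α), add_pow]
          rw [Finset.sum_mul]
          refine Finset.sum_congr rfl fun j hj => ?_
          have h1 : (r ^ α) ^ j = r ^ ((j:ℝ) * α) := by
            rw [← Real.rpow_natCast (r ^ α) j, ← Real.rpow_mul hr0, mul_comm]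
          have h2 : r ^ ((j:ℝ) * α + 1) = r ^ ((j:ℝ) * α) * r := by
            rw [Real.rpow_add' hr0 (by positivity), Real.rpow_one]
          rw [h1, one_pow, mul_one, h2]
          ring
        rw [intervalIntegral.integral_congr hcong]
        rw [intervalIntegral.integral_finset_sum]
        · refine Finset.sum_congr rfl fun j _ => ?_
          rw [intervalIntegral.integral_const_mul, integral_rpow (Or.inl (by have := mul_nonneg (j.cast_nonneg : (0:ℝ) ≤ j) hα.le; linarith))]
          rw [Real.zero_rpow (by positivity)]
          ring_nf
        · intro j _
          exact (intervalIntegral.intervalIntegrable_rpow' (by have := mul_nonneg (j.cast_nonneg : (0:ℝ) ≤ j) hα.le; linarith)).const_mul _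
      rw [key, Finset.mul_sum]
      refine Finset.sum_congr rfl fun j _ => ?_
      have hDα : D ^ ((j : ℝ) * α + 2) = D ^ ((j:ℝ) * α) * D ^ (2:ℕ) := by
        rw [Real.rpow_add' hD.le (by positivity), show (2:ℝ)=((2:ℕ):ℝ) by norm_num, Real.rpow_natCast]
      rw [hDα]
      field_simp
  ·   set M : ℝ := 1 + D ^ α with hM
      set c : ℝ := (K:ℝ) * M with hc
      set J : ℝ := ∫ r in (0:ℝ)..D, (1 + r ^ α) ^ K * r with hJ
      set L : ℝ := (2 / D ^ 2) * J with hL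
      have hcα : Continuous fun r : ℝ => r ^ α :=
        continuous_iff_continuousAt.mpr fun x => Real.continuousAt_rpow_const x α (Or.inr hα.le)
      have hFc : Continuous fun r : ℝ => (1 + r ^ α) ^ K * r :=
        (((continuous_const.add hcα).pow K).mul continuous_id)
      have hFint : IntervalIntegrable (fun r : ℝ => (1 + r ^ α) ^ K * r)
          MeasureTheory.volume 0 D := hFc.intervalIntegrable _ _
      -- main bounds
      have hbound : ∀ x ∈ Set.Ioi (0:ℝ),
          Real.exp (-(c * x)) * L ≤ Φ x / x ^ K ∧ Φ x / x ^ K ≤ L := by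
        intro x hx
        have hx0 : (0:ℝ) < x := hx
        have hxK : (0:ℝ) < x ^ K := pow_pos hx0 K
        have hGc : Continuous fun r : ℝ => (1 - Real.exp (-(1 + r ^ α) * x)) ^ K * r :=
          (((continuous_const.sub (Real.continuous_exp.comp
            (((continuous_const.add hcα).neg).mul continuous_const))).pow K).mul continuous_id)
        have hGint : IntervalIntegrable (fun r : ℝ => (1 - Real.exp (-(1 + r ^ α) * x)) ^ K * r)
            MeasureTheory.volume 0 D := hGc.intervalIntegrable _ _
        -- pointwise bounds on [0, D]
        have hpt : ∀ r ∈ Set.Icc (0:ℝ) D,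
            Real.exp (-(c * x)) * x ^ K * ((1 + r ^ α) ^ K * r)
              ≤ (1 - Real.exp (-(1 + r ^ α) * x)) ^ K * r ∧
            (1 - Real.exp (-(1 + r ^ α) * x)) ^ K * r ≤ x ^ K * ((1 + r ^ α) ^ K * r) := by
          intro r hr
          have hr0 : (0:ℝ) ≤ r := hr.1
          set t : ℝ := 1 + r ^ α with ht
          have ht0 : (0:ℝ) < t := by positivity
          have htM : t ≤ M := by
            have : r ^ α ≤ D ^ α := Real.rpow_le_rpow hr0 hr.2 hα.le
            simp only [ht, hM]; linarith
          have hu0 : (0:ℝ) ≤ t * x := by positivity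
          obtain ⟨hlo, hhi⟩ := exp_bd (t * x) hu0
          have hnn : (0:ℝ) ≤ 1 - Real.exp (-(t * x)) := by
            have := Real.exp_le_one_iff.mpr (by linarith : -(t*x) ≤ 0)
            linarith
          have harg : -t * x = -(t * x) := by ring
          constructor
          · -- lower
            have h1 : (t * x * Real.exp (-(t * x))) ^ K ≤ (1 - Real.exp (-(t * x))) ^ K :=
              pow_le_pow_left₀ (by positivity) hlo K
            have h2 : Real.exp (-(c * x)) ≤ Real.exp (-(t * x)) ^ K := by
              rw [← Real.exp_nat_mul]
              apply Real.exp_le_exp.mpr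
              have : t * x ≤ M * x := by nlinarith
              have hKt : (K:ℝ) * -(t*x) = -((K:ℝ) * (t * x)) := by ring
              rw [hKt, hc]
              have hK0 : (0:ℝ) ≤ (K:ℝ) := Nat.cast_nonneg K
              nlinarith
            have h3 : Real.exp (-(c * x)) * x ^ K * (t ^ K * r)
                ≤ (t * x * Real.exp (-(t * x))) ^ K * r := by
              rw [mul_pow, mul_pow]
              calc Real.exp (-(c * x)) * x ^ K * (t ^ K * r)
                  = (Real.exp (-(c*x)) * (t ^ K * x ^ K)) * r := by ring
                _ ≤ (Real.exp (-(t*x)) ^ K * (t ^ K * x ^ K)) * r := by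
                    apply mul_le_mul_of_nonneg_right _ hr0
                    exact mul_le_mul_of_nonneg_right h2 (by positivity)
                _ = t ^ K * x ^ K * Real.exp (-(t * x)) ^ K * r := by ring
            rw [harg]
            calc Real.exp (-(c * x)) * x ^ K * (t ^ K * r)
                ≤ (t * x * Real.exp (-(t * x))) ^ K * r := h3
              _ ≤ (1 - Real.exp (-(t * x))) ^ K * r := mul_le_mul_of_nonneg_right h1 hr0
          · -- upper
            have h1 : (1 - Real.exp (-(t * x))) ^ K ≤ (t * x) ^ K :=
              pow_le_pow_left₀ hnn hhi K
            rw [harg]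
            calc (1 - Real.exp (-(t * x))) ^ K * r ≤ (t * x) ^ K * r :=
                  mul_le_mul_of_nonneg_right h1 hr0
              _ = x ^ K * (t ^ K * r) := by rw [mul_pow]; ring
        -- integrate
        have hIlo : Real.exp (-(c * x)) * x ^ K * J
            ≤ ∫ r in (0:ℝ)..D, (1 - Real.exp (-(1 + r ^ α) * x)) ^ K * r := by
          have := intervalIntegral.integral_mono_on hD.le
            ((continuous_const.mul hFc).intervalIntegrable 0 D) hGint (fun r hr => (hpt r hr).1)
          simp only [Pi.mul_apply] at this
          rwa [intervalIntegral.integral_const_mul] at this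
        have hIhi : (∫ r in (0:ℝ)..D, (1 - Real.exp (-(1 + r ^ α) * x)) ^ K * r)
            ≤ x ^ K * J := by
          have := intervalIntegral.integral_mono_on hD.le hGint
            ((continuous_const.mul hFc).intervalIntegrable 0 D) (fun r hr => (hpt r hr).2)
          simp only [Pi.mul_apply] at this
          rwa [intervalIntegral.integral_const_mul] at this
        have h2D : (0:ℝ) ≤ 2 / D ^ 2 := by positivity
        constructor
        · rw [le_div_iff₀ hxK, hΦ x]
          calc Real.exp (-(c * x)) * L * x ^ K
              = (2 / D ^ 2) * (Real.exp (-(c * x)) * x ^ K * J) := by rw [hL]; ring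
            _ ≤ (2 / D ^ 2) * ∫ r in (0:ℝ)..D, (1 - Real.exp (-(1 + r ^ α) * x)) ^ K * r :=
                mul_le_mul_of_nonneg_left hIlo h2D
        · rw [div_le_iff₀ hxK, hΦ x]
          calc (2 / D ^ 2) * ∫ r in (0:ℝ)..D, (1 - Real.exp (-(1 + r ^ α) * x)) ^ K * r
              ≤ (2 / D ^ 2) * (x ^ K * J) := mul_le_mul_of_nonneg_left hIhi h2D
            _ = L * x ^ K := by rw [hL]; ring
      -- squeeze
      have hlo : Filter.Tendsto (fun x : ℝ => Real.exp (-(c * x)) * L)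
          (nhdsWithin 0 (Set.Ioi 0)) (nhds L) := by
        have h0 : Filter.Tendsto (fun x : ℝ => Real.exp (-(c * x)) * L) (nhds 0)
            (nhds (Real.exp (-(c * 0)) * L)) :=
          ((Real.continuous_exp.comp (continuous_const.mul continuous_id).neg).mul
            continuous_const).tendsto 0
        simp only [mul_zero, neg_zero, Real.exp_zero, one_mul] at h0
        exact h0.mono_left nhdsWithin_le_nhds
      exact tendsto_of_tendsto_of_tendsto_of_le_of_le' hlo tendsto_const_nhds
        (eventually_nhdsWithin_of_forall fun x hx => (hbound x hx).1)
        (eventually_nhdsWithin_of_forall fun x hx => (hbound x hx).2)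
end

section
/- Let α > 0, D_F > 0, 0 ≤ D_0 < D_1, γ_B, γ_F > 0, and let K ≥ 1 be a natural number. Define Φ_K(x) = (2/D_F²)·∫_0^{D_F} (1 − exp(−(1+r^α)·x))^K·r dr, f_B(w) = (2/(D_1²−D_0²))·∫_{D_0}^{D_1} (1+r^α)·exp(−(1+r^α)·w)·r dr, and F_B(y) = (2/(D_1²−D_0²))·∫_{D_0}^{D_1} (1 − exp(−(1+r^α)·y))·r dr. For P > 0, define the outage probability P_out(P) = ∫_0^{γ_B·(1+γ_F)/P} f_B(w)·Φ_K(γ_F·w + γ_F/P) dw + (1 − F_B(γ_B·(1+γ_F)/P))·Φ_K(γ_F/P). Then lim_{P→∞} P^K·P_out(P) = γ_F^K·(2/D_F²)·∫_0^{D_F} (1+r^α)^K·r dr. In particular, the outage probability decays like P^{−K}, i.e., a diversity order of K is achieved for all positive target SINRs γ_B, γ_F. -/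
open Real Filter MeasureTheory

lemma aux_exp_slope (b : ℝ) :
    Tendsto (fun P : ℝ => P * (1 - Real.exp (b / P))) atTop (nhds (-b)) := by
  have hd : HasDerivAt (fun t : ℝ => Real.exp (b * t)) b 0 := by
    simpa using ((hasDerivAt_id (0:ℝ)).const_mul b).exp
  rw [hasDerivAt_iff_tendsto_slope] at hd
  have h1 : Tendsto (fun P : ℝ => 1 / P) atTop (nhdsWithin (0:ℝ) {(0:ℝ)}ᶜ) := by
    apply tendsto_nhdsWithin_of_tendsto_nhds_of_eventually_within
    · simpa [one_div] using tendsto_inv_atTop_zero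
    · filter_upwards [eventually_gt_atTop (0:ℝ)] with P hP
      simp [one_div, hP.ne']
  have h2 := (hd.comp h1).neg
  refine h2.congr' ?_
  filter_upwards [eventually_gt_atTop (0:ℝ)] with P hP
  have hP0 : P ≠ 0 := hP.ne'
  simp only [Function.comp_apply, slope_def_field, mul_zero, Real.exp_zero, sub_zero,
    mul_one_div, div_div_eq_mul_div, one_div, inv_inv]
  simp only [div_eq_mul_inv, inv_inv]; ring

/-- Pointwise limit: `P (1 - exp(-a γ / P)) → a γ`. -/
lemma aux_pointwise (a γ : ℝ) :
    Tendsto (fun P : ℝ => P * (1 - Real.exp (-a * (γ / P)))) atTop (nhds (a * γ)) := by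
  have h := aux_exp_slope (-(a * γ))
  rw [neg_neg] at h
  refine h.congr fun P => ?_
  congr 2
  ring

/-- Exact-integral version of Corollary 8: the CS-SGF-PC outage probability
`P_out(P) = ∫_0^{γB(1+γF)/P} fB(w) Φ(γF w + γF/P) dw + (1 - FB(γB(1+γF)/P)) Φ(γF/P)`
satisfies `P^K P_out(P) → γF^K (2/DF²) ∫_0^{DF} (1+r^α)^K r dr` as `P → ∞`,
i.e. a diversity order of `K` is achieved for all positive target SINRs. -/
theorem cs_sgf_pc_full_diversity (α DF D0 D1 γB γF : ℝ)
    (hα : 0 < α) (hDF : 0 < DF) (hD0 : 0 ≤ D0) (hD01 : D0 < D1)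
    (hγB : 0 < γB) (hγF : 0 < γF) (K : ℕ) (hK : 1 ≤ K)
    (Φ fB FB Pout : ℝ → ℝ)
    (hΦ : ∀ x, Φ x = (2 / DF ^ 2) *
      ∫ r in (0:ℝ)..DF, (1 - Real.exp (-(1 + r ^ α) * x)) ^ K * r)
    (hfB : ∀ w, fB w = (2 / (D1 ^ 2 - D0 ^ 2)) *
      ∫ r in D0..D1, (1 + r ^ α) * Real.exp (-(1 + r ^ α) * w) * r)
    (hFB : ∀ y, FB y = (2 / (D1 ^ 2 - D0 ^ 2)) *
      ∫ r in D0..D1, (1 - Real.exp (-(1 + r ^ α) * y)) * r)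
    (hPout : ∀ P : ℝ, 0 < P → Pout P =
      (∫ w in (0:ℝ)..(γB * (1 + γF) / P), fB w * Φ (γF * w + γF / P)) +
        (1 - FB (γB * (1 + γF) / P)) * Φ (γF / P)) :
    Filter.Tendsto (fun P : ℝ => P ^ K * Pout P) Filter.atTop
      (nhds (γF ^ K * ((2 / DF ^ 2) * ∫ r in (0:ℝ)..DF, (1 + r ^ α) ^ K * r))) := by
  have hra : Continuous fun r : ℝ => r ^ α := Real.continuous_rpow_const hα.le
  have hcont_a : Continuous fun r : ℝ => 1 + r ^ α := continuous_const.add hra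
  have hΔ : 0 < D1 ^ 2 - D0 ^ 2 := by nlinarith
  set c : ℝ := γB * (1 + γF) with hc
  have hcpos : 0 < c := by positivity
  set L : ℝ := (2 / DF ^ 2) * ∫ r in (0:ℝ)..DF, (1 + r ^ α) ^ K * r with hL
  -- integrand of Φ is continuous
  have hcontΦ : ∀ x : ℝ, Continuous fun r : ℝ =>
      (1 - Real.exp (-(1 + r ^ α) * x)) ^ K * r :=
    fun x => ((continuous_const.sub ((hcont_a.neg.mul continuous_const).rexp)).pow K).mul
      continuous_id
  -- main lemma: P^K Φ(γ/P) → γ^K L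
  have hmain : ∀ γ : ℝ, 0 < γ → Tendsto (fun P : ℝ => P ^ K * Φ (γ / P)) atTop
      (nhds (γ ^ K * L)) := by
    intro γ hγ
    have key : Tendsto
        (fun P : ℝ => ∫ r in (0:ℝ)..DF,
          (P * (1 - Real.exp (-(1 + r ^ α) * (γ / P)))) ^ K * r) atTop
        (nhds (∫ r in (0:ℝ)..DF, ((1 + r ^ α) * γ) ^ K * r)) := by
      refine intervalIntegral.tendsto_integral_filter_of_dominated_convergence
        (fun r => ((1 + r ^ α) * γ) ^ K * r) ?_ ?_ ?_ ?_
      · refine Eventually.of_forall fun P => ?_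
        exact (((continuous_const.mul (continuous_const.sub
          ((hcont_a.neg.mul continuous_const).rexp))).pow K).mul continuous_id).aestronglyMeasurable
      · filter_upwards [eventually_gt_atTop (0:ℝ)] with P hP
        refine Eventually.of_forall fun r hr => ?_
        rw [Set.uIoc_of_le hDF.le] at hr
        have hr0 : 0 < r := hr.1
        have haK : (0:ℝ) ≤ r ^ α := Real.rpow_nonneg hr0.le α
        have ha1 : (1:ℝ) ≤ 1 + r ^ α := by linarith
        have hexple : 1 - Real.exp (-(1 + r ^ α) * (γ / P)) ≤ (1 + r ^ α) * (γ / P) := by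
          have := Real.add_one_le_exp (-((1 + r ^ α) * (γ / P)))
          rw [neg_mul]
          linarith
        have hexp0 : 0 ≤ 1 - Real.exp (-(1 + r ^ α) * (γ / P)) := by
          have : Real.exp (-(1 + r ^ α) * (γ / P)) ≤ Real.exp 0 := by
            apply Real.exp_le_exp.mpr
            have h1 : 0 ≤ (1 + r ^ α) * (γ / P) := by positivity
            nlinarith
          rw [Real.exp_zero] at this
          linarith
        have hub : P * (1 - Real.exp (-(1 + r ^ α) * (γ / P))) ≤ (1 + r ^ α) * γ := by
          have := mul_le_mul_of_nonneg_left hexple hP.le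
          calc P * (1 - Real.exp (-(1 + r ^ α) * (γ / P)))
              ≤ P * ((1 + r ^ α) * (γ / P)) := this
            _ = (1 + r ^ α) * γ := by field_simp
        have hlb : 0 ≤ P * (1 - Real.exp (-(1 + r ^ α) * (γ / P))) := by positivity
        rw [Real.norm_eq_abs, abs_of_nonneg (by positivity)]
        exact mul_le_mul_of_nonneg_right (pow_le_pow_left₀ hlb hub K) hr0.le
      · exact (((hcont_a.mul continuous_const).pow K).mul continuous_id).intervalIntegrable _ _
      · refine Eventually.of_forall fun r hr => ?_
        exact ((aux_pointwise (1 + r ^ α) γ).pow K).mul_const r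
    have heq : (fun P : ℝ => (2 / DF ^ 2) * ∫ r in (0:ℝ)..DF,
        (P * (1 - Real.exp (-(1 + r ^ α) * (γ / P)))) ^ K * r)
        =ᶠ[atTop] fun P : ℝ => P ^ K * Φ (γ / P) := by
      refine Eventually.of_forall fun P => ?_
      show (2 / DF ^ 2) * (∫ r in (0:ℝ)..DF,
        (P * (1 - Real.exp (-(1 + r ^ α) * (γ / P)))) ^ K * r) = P ^ K * Φ (γ / P)
      rw [hΦ]
      have h1 : (∫ r in (0:ℝ)..DF, (P * (1 - Real.exp (-(1 + r ^ α) * (γ / P)))) ^ K * r)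
          = P ^ K * ∫ r in (0:ℝ)..DF, (1 - Real.exp (-(1 + r ^ α) * (γ / P))) ^ K * r := by
        rw [← intervalIntegral.integral_const_mul]
        exact intervalIntegral.integral_congr fun r _ => by rw [mul_pow, mul_assoc]
      rw [h1]; ring
    have hval : (2 / DF ^ 2) * (∫ r in (0:ℝ)..DF, ((1 + r ^ α) * γ) ^ K * r)
        = γ ^ K * L := by
      rw [hL]
      have h2 : (∫ r in (0:ℝ)..DF, ((1 + r ^ α) * γ) ^ K * r)
          = γ ^ K * ∫ r in (0:ℝ)..DF, (1 + r ^ α) ^ K * r := by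
        rw [← intervalIntegral.integral_const_mul]
        exact intervalIntegral.integral_congr fun r _ => by rw [mul_pow]; ring
      rw [h2]; ring
    exact hval ▸ (Tendsto.congr' heq (key.const_mul (2 / DF ^ 2)))
  -- nonnegativity and monotonicity of Φ
  have hΦ_nonneg : ∀ x : ℝ, 0 ≤ x → 0 ≤ Φ x := by
    intro x hx
    rw [hΦ]
    refine mul_nonneg (by positivity) ?_
    refine intervalIntegral.integral_nonneg hDF.le fun r hr => ?_
    have haK : (0:ℝ) ≤ r ^ α := Real.rpow_nonneg hr.1 α
    have : Real.exp (-(1 + r ^ α) * x) ≤ Real.exp 0 := by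
      apply Real.exp_le_exp.mpr; nlinarith
    rw [Real.exp_zero] at this
    exact mul_nonneg (pow_nonneg (sub_nonneg.mpr this) K) hr.1
  have hΦ_mono : ∀ x y : ℝ, 0 ≤ x → x ≤ y → Φ x ≤ Φ y := by
    intro x y hx hxy
    rw [hΦ, hΦ]
    refine mul_le_mul_of_nonneg_left ?_ (by positivity)
    refine intervalIntegral.integral_mono_on hDF.le
      ((hcontΦ x).intervalIntegrable _ _) ((hcontΦ y).intervalIntegrable _ _) fun r hr => ?_
    have haK : (0:ℝ) ≤ r ^ α := Real.rpow_nonneg hr.1 α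
    have hexp : Real.exp (-(1 + r ^ α) * y) ≤ Real.exp (-(1 + r ^ α) * x) := by
      apply Real.exp_le_exp.mpr; nlinarith
    have h1 : 0 ≤ 1 - Real.exp (-(1 + r ^ α) * x) := by
      have : Real.exp (-(1 + r ^ α) * x) ≤ Real.exp 0 := by
        apply Real.exp_le_exp.mpr; nlinarith
      rw [Real.exp_zero] at this; linarith
    exact mul_le_mul_of_nonneg_right (pow_le_pow_left₀ h1 (by linarith) K) hr.1
  -- bound for fB
  set M1 : ℝ := (2 / (D1 ^ 2 - D0 ^ 2)) * ∫ r in D0..D1, (1 + r ^ α) * r with hM1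
  have hfB_nonneg : ∀ w : ℝ, 0 ≤ w → 0 ≤ fB w := by
    intro w hw
    rw [hfB]
    refine mul_nonneg (by positivity) ?_
    refine intervalIntegral.integral_nonneg hD01.le fun r hr => ?_
    have hr0 : 0 ≤ r := le_trans hD0 hr.1
    have haK : (0:ℝ) ≤ r ^ α := Real.rpow_nonneg hr0 α
    have := Real.exp_pos (-(1 + r ^ α) * w)
    positivity
  have hfB_bound : ∀ w : ℝ, 0 ≤ w → fB w ≤ M1 := by
    intro w hw
    rw [hfB, hM1]
    refine mul_le_mul_of_nonneg_left ?_ (by positivity)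
    refine intervalIntegral.integral_mono_on hD01.le
      (((hcont_a.mul ((hcont_a.neg.mul continuous_const).rexp)).mul
        continuous_id).intervalIntegrable _ _)
      ((hcont_a.mul continuous_id).intervalIntegrable _ _) fun r hr => ?_
    have hr0 : 0 ≤ r := le_trans hD0 hr.1
    have haK : (0:ℝ) ≤ r ^ α := Real.rpow_nonneg hr0 α
    have hexp : Real.exp (-(1 + r ^ α) * w) ≤ 1 := by
      have h0 : Real.exp (-(1 + r ^ α) * w) ≤ Real.exp 0 := by
        apply Real.exp_le_exp.mpr; nlinarith
      rwa [Real.exp_zero] at h0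
    have h2 : (1 + r ^ α) * Real.exp (-(1 + r ^ α) * w) ≤ (1 + r ^ α) * 1 :=
      mul_le_mul_of_nonneg_left hexp (by linarith)
    calc (1 + r ^ α) * Real.exp (-(1 + r ^ α) * w) * r
        ≤ ((1 + r ^ α) * 1) * r := mul_le_mul_of_nonneg_right h2 hr0
      _ = (1 + r ^ α) * r := by ring
  have hM1_nonneg : 0 ≤ M1 := le_trans (hfB_nonneg 0 le_rfl) (hfB_bound 0 le_rfl)
  -- FB bounds
  have hFB_nonneg : ∀ y : ℝ, 0 ≤ y → 0 ≤ FB y := by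
    intro y hy
    rw [hFB]
    refine mul_nonneg (by positivity) ?_
    refine intervalIntegral.integral_nonneg hD01.le fun r hr => ?_
    have hr0 : 0 ≤ r := le_trans hD0 hr.1
    have haK : (0:ℝ) ≤ r ^ α := Real.rpow_nonneg hr0 α
    have hexp : Real.exp (-(1 + r ^ α) * y) ≤ 1 := by
      have h0 : Real.exp (-(1 + r ^ α) * y) ≤ Real.exp 0 := by
        apply Real.exp_le_exp.mpr; nlinarith
      rwa [Real.exp_zero] at h0
    exact mul_nonneg (sub_nonneg.mpr hexp) hr0
  have hFB_bound : ∀ y : ℝ, 0 ≤ y → FB y ≤ M1 * y := by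
    intro y hy
    rw [hFB, hM1]
    have h1 : (∫ r in D0..D1, (1 - Real.exp (-(1 + r ^ α) * y)) * r)
        ≤ ∫ r in D0..D1, ((1 + r ^ α) * r) * y := by
      refine intervalIntegral.integral_mono_on hD01.le
        (((continuous_const.sub ((hcont_a.neg.mul continuous_const).rexp)).mul
          continuous_id).intervalIntegrable _ _)
        (((hcont_a.mul continuous_id).mul continuous_const).intervalIntegrable _ _)
        fun r hr => ?_
      have hr0 : 0 ≤ r := le_trans hD0 hr.1
      have haK : (0:ℝ) ≤ r ^ α := Real.rpow_nonneg hr0 α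
      have hexple : 1 - Real.exp (-(1 + r ^ α) * y) ≤ (1 + r ^ α) * y := by
        have := Real.add_one_le_exp (-((1 + r ^ α) * y))
        rw [neg_mul]
        linarith
      calc (1 - Real.exp (-(1 + r ^ α) * y)) * r
          ≤ ((1 + r ^ α) * y) * r := by
            refine mul_le_mul_of_nonneg_right hexple hr0
        _ = ((1 + r ^ α) * r) * y := by ring
    have h2 : (∫ r in D0..D1, ((1 + r ^ α) * r) * y)
        = (∫ r in D0..D1, (1 + r ^ α) * r) * y := by
      rw [← intervalIntegral.integral_mul_const]
    calc (2 / (D1 ^ 2 - D0 ^ 2)) * ∫ r in D0..D1, (1 - Real.exp (-(1 + r ^ α) * y)) * r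
        ≤ (2 / (D1 ^ 2 - D0 ^ 2)) * ∫ r in D0..D1, ((1 + r ^ α) * r) * y :=
          mul_le_mul_of_nonneg_left h1 (by positivity)
      _ = (2 / (D1 ^ 2 - D0 ^ 2)) * (∫ r in D0..D1, (1 + r ^ α) * r) * y := by
          rw [h2]; ring
  have hFBtendsto : Tendsto (fun P : ℝ => FB (c / P)) atTop (nhds 0) := by
    have hub : Tendsto (fun P : ℝ => (M1 * c) * P⁻¹) atTop (nhds 0) := by
      simpa using tendsto_inv_atTop_zero.const_mul (M1 * c)
    refine squeeze_zero' ?_ ?_ hub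
    · filter_upwards [eventually_gt_atTop (0:ℝ)] with P hP
      exact hFB_nonneg _ (by positivity)
    · filter_upwards [eventually_gt_atTop (0:ℝ)] with P hP
      have := hFB_bound (c / P) (by positivity)
      calc FB (c / P) ≤ M1 * (c / P) := this
        _ = (M1 * c) * P⁻¹ := by ring
  -- first term tends to zero
  have hI1 : Tendsto (fun P : ℝ => P ^ K *
      ∫ w in (0:ℝ)..(c / P), fB w * Φ (γF * w + γF / P)) atTop (nhds 0) := by
    have hγ' : 0 < γF * (c + 1) := by positivity
    have hub : Tendsto (fun P : ℝ => ((M1 * c) * P⁻¹) *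
        (P ^ K * Φ (γF * (c + 1) / P))) atTop (nhds 0) := by
      have := (tendsto_inv_atTop_zero.const_mul (M1 * c)).mul (hmain (γF * (c + 1)) hγ')
      simpa using this
    refine squeeze_zero_norm' ?_ hub
    filter_upwards [eventually_gt_atTop (0:ℝ)] with P hP
    have hΦbig_nonneg : 0 ≤ Φ (γF * (c + 1) / P) := hΦ_nonneg _ (by positivity)
    have hnorm : ‖∫ w in (0:ℝ)..(c / P), fB w * Φ (γF * w + γF / P)‖
        ≤ (M1 * Φ (γF * (c + 1) / P)) * |c / P - 0| := by
      refine intervalIntegral.norm_integral_le_of_norm_le_const fun w hw => ?_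
      rw [Set.uIoc_of_le (by positivity : (0:ℝ) ≤ c / P)] at hw
      have hw0 : 0 < w := hw.1
      have hwle : w ≤ c / P := hw.2
      have harg0 : 0 ≤ γF * w + γF / P := by positivity
      have hargle : γF * w + γF / P ≤ γF * (c + 1) / P := by
        have h3 : γF * w ≤ γF * (c / P) := mul_le_mul_of_nonneg_left hwle hγF.le
        have : γF * (c / P) + γF / P = γF * (c + 1) / P := by field_simp
        linarith
      have hΦle : Φ (γF * w + γF / P) ≤ Φ (γF * (c + 1) / P) :=
        hΦ_mono _ _ harg0 hargle
      have hΦn : 0 ≤ Φ (γF * w + γF / P) := hΦ_nonneg _ harg0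
      rw [Real.norm_eq_abs, abs_mul, abs_of_nonneg (hfB_nonneg w hw0.le),
        abs_of_nonneg hΦn]
      exact mul_le_mul (hfB_bound w hw0.le) hΦle hΦn hM1_nonneg
    rw [Real.norm_eq_abs, abs_mul, abs_of_nonneg (pow_nonneg hP.le K)]
    calc P ^ K * |∫ w in (0:ℝ)..(c / P), fB w * Φ (γF * w + γF / P)|
        ≤ P ^ K * ((M1 * Φ (γF * (c + 1) / P)) * |c / P - 0|) := by
          exact mul_le_mul_of_nonneg_left hnorm (pow_nonneg hP.le K)
      _ = ((M1 * c) * P⁻¹) * (P ^ K * Φ (γF * (c + 1) / P)) := by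
          rw [sub_zero, abs_of_nonneg (by positivity : (0:ℝ) ≤ c / P)]
          field_simp
  -- second term
  have hI2 : Tendsto (fun P : ℝ => (1 - FB (c / P)) * (P ^ K * Φ (γF / P))) atTop
      (nhds (γF ^ K * L)) := by
    have h1 : Tendsto (fun P : ℝ => 1 - FB (c / P)) atTop (nhds 1) := by
      have h0 : Tendsto (fun _ : ℝ => (1:ℝ)) atTop (nhds 1) := tendsto_const_nhds
      simpa using h0.sub hFBtendsto
    simpa using h1.mul (hmain γF hγF)
  -- assemble
  have hfinal : (fun P : ℝ => P ^ K *
      (∫ w in (0:ℝ)..(c / P), fB w * Φ (γF * w + γF / P)) +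
      (1 - FB (c / P)) * (P ^ K * Φ (γF / P)))
      =ᶠ[atTop] fun P : ℝ => P ^ K * Pout P := by
    filter_upwards [eventually_gt_atTop (0:ℝ)] with P hP
    rw [hPout P hP]
    ring
  have := (hI1.add hI2).congr' hfinal
  simpa using this
end

section
/- Let α > 0, D_F > 0, 0 ≤ D_0 < D_1, and γ_B, γ_F > 0 with γ_B·γ_F < 1, and let K ≥ 1 be a natural number. Define Φ_K(x) = (2/D_F²)·∫_0^{D_F} (1 − exp(−(1+r^α)·x))^K·r dr, f_B(w) = (2/(D_1²−D_0²))·∫_{D_0}^{D_1} (1+r^α)·exp(−(1+r^α)·w)·r dr, and F_B(y) = (2/(D_1²−D_0²))·∫_{D_0}^{D_1} (1 − exp(−(1+r^α)·y))·r dr. For P > 0, set α_1(P) = γ_B·(1+γ_F)/P and α_2(P) = γ_B·(1+γ_F)/(P·(1−γ_B·γ_F)), and define P_out(P) = ∫_0^{α_2(P)} f_B(w)·Φ_K(γ_F·w + γ_F/P) dw − ∫_{α_1(P)}^{α_2(P)} f_B(w)·Φ_K((P·w − γ_B)/(P·γ_B)) dw + (1 − F_B(α_1(P)))·Φ_K(γ_F/P).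 Then lim_{P→∞} P^K·P_out(P) = γ_F^K·(2/D_F²)·∫_0^{D_F} (1+r^α)^K·r dr; in particular a diversity order of K is achieved. -/
open Real Filter MeasureTheory Set

private lemma aux_exp1 (t : ℝ) : 1 - Real.exp (-t) ≤ t := by
  nlinarith [Real.add_one_le_exp (-t)]

private lemma aux_exp2 {t : ℝ} (ht : 0 ≤ t) : 0 ≤ 1 - Real.exp (-t) := by
  have h : Real.exp (-t) ≤ 1 := by
    rw [← Real.exp_zero]
    exact Real.exp_le_exp.2 (by linarith)
  linarith

private lemma aux_exp_le_one {s : ℝ} (hs : s ≤ 0) : Real.exp s ≤ 1 := by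
  rw [← Real.exp_zero]
  exact Real.exp_le_exp.2 hs

private lemma aux_exp3 (t : ℝ) : t * Real.exp (-t) ≤ 1 - Real.exp (-t) := by
  have h := Real.add_one_le_exp t
  have hp := (Real.exp_pos (-t)).le
  have he : Real.exp t * Real.exp (-t) = 1 := by
    rw [← Real.exp_add]; simp
  nlinarith

set_option maxHeartbeats 1600000 in
/-- Exact-integral version of the first half of Corollary 4: when `γB γF < 1`, the
fixed-power CS-SGF outage probability
`P_out(P) = ∫_0^{α2(P)} fB(w) Φ(γF w + γF/P) dw - ∫_{α1(P)}^{α2(P)} fB(w) Φ((P w - γB)/(P γB)) dw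
 + (1 - FB(α1(P))) Φ(γF/P)`
satisfies `P^K P_out(P) → γF^K (2/DF²) ∫_0^{DF} (1+r^α)^K r dr` as `P → ∞`,
i.e. full diversity order `K` is achieved. -/
theorem cs_sgf_full_diversity_small_rates (α DF D0 D1 γB γF : ℝ)
    (hα : 0 < α) (hDF : 0 < DF) (hD0 : 0 ≤ D0) (hD01 : D0 < D1)
    (hγB : 0 < γB) (hγF : 0 < γF) (hprod : γB * γF < 1) (K : ℕ) (hK : 1 ≤ K)
    (Φ fB FB Pout : ℝ → ℝ) (a1 a2 : ℝ → ℝ)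
    (hΦ : ∀ x, Φ x = (2 / DF ^ 2) *
      ∫ r in (0:ℝ)..DF, (1 - Real.exp (-(1 + r ^ α) * x)) ^ K * r)
    (hfB : ∀ w, fB w = (2 / (D1 ^ 2 - D0 ^ 2)) *
      ∫ r in D0..D1, (1 + r ^ α) * Real.exp (-(1 + r ^ α) * w) * r)
    (hFB : ∀ y, FB y = (2 / (D1 ^ 2 - D0 ^ 2)) *
      ∫ r in D0..D1, (1 - Real.exp (-(1 + r ^ α) * y)) * r)
    (ha1 : ∀ P, a1 P = γB * (1 + γF) / P)
    (ha2 : ∀ P, a2 P = γB * (1 + γF) / (P * (1 - γB * γF)))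
    (hPout : ∀ P : ℝ, 0 < P → Pout P =
      (∫ w in (0:ℝ)..(a2 P), fB w * Φ (γF * w + γF / P)) -
        (∫ w in (a1 P)..(a2 P), fB w * Φ ((P * w - γB) / (P * γB))) +
        (1 - FB (a1 P)) * Φ (γF / P)) :
    Filter.Tendsto (fun P : ℝ => P ^ K * Pout P) Filter.atTop
      (nhds (γF ^ K * ((2 / DF ^ 2) * ∫ r in (0:ℝ)..DF, (1 + r ^ α) ^ K * r))) := by
  have hD1 : 0 < D1 := lt_of_le_of_lt hD0 hD01
  have hDsq : 0 < D1 ^ 2 - D0 ^ 2 := by nlinarith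
  have hs : 0 < 1 - γB * γF := by linarith
  have hγF1 : 0 < 1 + γF := by linarith
  set M1 : ℝ := 1 + DF ^ α with hM1def
  set M2 : ℝ := 1 + D1 ^ α with hM2def
  have hM1 : 0 < M1 := by
    have := Real.rpow_nonneg hDF.le α
    rw [hM1def]; linarith
  have hM2 : 0 < M2 := by
    have := Real.rpow_nonneg hD1.le α
    rw [hM2def]; linarith
  have hrpow : Continuous fun r : ℝ => r ^ α :=
    continuous_iff_continuousAt.2 fun x => Real.continuousAt_rpow_const x α (Or.inr hα.le)
  have hcontc : Continuous fun r : ℝ => 1 + r ^ α := continuous_const.add hrpow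
  have hc_mem1 : ∀ r ∈ Icc (0:ℝ) DF, 1 ≤ 1 + r ^ α ∧ 1 + r ^ α ≤ M1 := by
    intro r hr
    have h1 : 0 ≤ r ^ α := Real.rpow_nonneg hr.1 α
    have h2 : r ^ α ≤ DF ^ α := Real.rpow_le_rpow hr.1 hr.2 hα.le
    exact ⟨by linarith, by rw [hM1def]; linarith⟩
  have hc_mem2 : ∀ r ∈ Icc D0 D1, 1 ≤ 1 + r ^ α ∧ 1 + r ^ α ≤ M2 := by
    intro r hr
    have hr0 : 0 ≤ r := le_trans hD0 hr.1
    have h1 : 0 ≤ r ^ α := Real.rpow_nonneg hr0 α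
    have h2 : r ^ α ≤ D1 ^ α := Real.rpow_le_rpow hr0 hr.2 hα.le
    exact ⟨by linarith, by rw [hM2def]; linarith⟩
  -- Φ bounds
  have hΦ_nonneg : ∀ x : ℝ, 0 ≤ x → 0 ≤ Φ x := by
    intro x hx
    rw [hΦ x]
    refine mul_nonneg (by positivity) ?_
    refine intervalIntegral.integral_nonneg hDF.le fun r hr => ?_
    have hc := (hc_mem1 r hr).1
    have hcx : 0 ≤ (1 + r ^ α) * x := mul_nonneg (by linarith) hx
    have h0 : 0 ≤ 1 - Real.exp (-(1 + r ^ α) * x) := by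
      rw [neg_mul]; exact aux_exp2 hcx
    exact mul_nonneg (pow_nonneg h0 K) hr.1
  have hΦ_le : ∀ x : ℝ, 0 ≤ x → Φ x ≤ (M1 * x) ^ K := by
    intro x hx
    rw [hΦ x]
    have hint1 : IntervalIntegrable
        (fun r : ℝ => (1 - Real.exp (-(1 + r ^ α) * x)) ^ K * r) volume 0 DF :=
      (((continuous_const.sub
        (Real.continuous_exp.comp (hcontc.neg.mul continuous_const))).pow K).mul
          continuous_id).intervalIntegrable 0 DF
    have hint2 : IntervalIntegrable (fun r : ℝ => (M1 * x) ^ K * r) volume 0 DF :=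
      (continuous_const.mul continuous_id).intervalIntegrable 0 DF
    have hmono : (∫ r in (0:ℝ)..DF, (1 - Real.exp (-(1 + r ^ α) * x)) ^ K * r)
        ≤ ∫ r in (0:ℝ)..DF, (M1 * x) ^ K * r := by
      refine intervalIntegral.integral_mono_on hDF.le hint1 hint2 fun r hr => ?_
      obtain ⟨hc1, hc2⟩ := hc_mem1 r hr
      have hcx : 0 ≤ (1 + r ^ α) * x := mul_nonneg (by linarith) hx
      have h0 : 0 ≤ 1 - Real.exp (-(1 + r ^ α) * x) := by
        rw [neg_mul]; exact aux_exp2 hcx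
      have h1 : 1 - Real.exp (-(1 + r ^ α) * x) ≤ (1 + r ^ α) * x := by
        rw [neg_mul]; exact aux_exp1 _
      have h2 : (1 + r ^ α) * x ≤ M1 * x := mul_le_mul_of_nonneg_right hc2 hx
      have h3 := pow_le_pow_left₀ h0 (le_trans h1 h2) K
      exact mul_le_mul_of_nonneg_right h3 hr.1
    calc (2 / DF ^ 2) * (∫ r in (0:ℝ)..DF, (1 - Real.exp (-(1 + r ^ α) * x)) ^ K * r)
        ≤ (2 / DF ^ 2) * ∫ r in (0:ℝ)..DF, (M1 * x) ^ K * r :=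
          mul_le_mul_of_nonneg_left hmono (by positivity)
      _ = (M1 * x) ^ K := by
          rw [intervalIntegral.integral_const_mul, integral_id]
          field_simp
          ring
  -- fB bounds
  have hfB_nonneg : ∀ w : ℝ, 0 ≤ fB w := by
    intro w
    rw [hfB w]
    refine mul_nonneg (by positivity) ?_
    refine intervalIntegral.integral_nonneg hD01.le fun r hr => ?_
    have hc := (hc_mem2 r hr).1
    have hr0 : 0 ≤ r := le_trans hD0 hr.1
    exact mul_nonneg (mul_nonneg (by linarith) (Real.exp_pos _).le) hr0
  have hfB_le : ∀ w : ℝ, 0 ≤ w → fB w ≤ M2 := by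
    intro w hw
    rw [hfB w]
    have hint1 : IntervalIntegrable
        (fun r : ℝ => (1 + r ^ α) * Real.exp (-(1 + r ^ α) * w) * r) volume D0 D1 :=
      ((hcontc.mul (Real.continuous_exp.comp (hcontc.neg.mul continuous_const))).mul
        continuous_id).intervalIntegrable _ _
    have hint2 : IntervalIntegrable (fun r : ℝ => M2 * r) volume D0 D1 :=
      (continuous_const.mul continuous_id).intervalIntegrable _ _
    have hmono : (∫ r in D0..D1, (1 + r ^ α) * Real.exp (-(1 + r ^ α) * w) * r)
        ≤ ∫ r in D0..D1, M2 * r := by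
      refine intervalIntegral.integral_mono_on hD01.le hint1 hint2 fun r hr => ?_
      obtain ⟨hc1, hc2⟩ := hc_mem2 r hr
      have hr0 : 0 ≤ r := le_trans hD0 hr.1
      have hexp : Real.exp (-(1 + r ^ α) * w) ≤ 1 :=
        aux_exp_le_one (by nlinarith)
      have h1 : (1 + r ^ α) * Real.exp (-(1 + r ^ α) * w) ≤ M2 := by
        nlinarith [(Real.exp_pos (-(1 + r ^ α) * w)).le]
      exact mul_le_mul_of_nonneg_right h1 hr0
    calc (2 / (D1 ^ 2 - D0 ^ 2)) *
          (∫ r in D0..D1, (1 + r ^ α) * Real.exp (-(1 + r ^ α) * w) * r)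
        ≤ (2 / (D1 ^ 2 - D0 ^ 2)) * ∫ r in D0..D1, M2 * r :=
          mul_le_mul_of_nonneg_left hmono (by positivity)
      _ = M2 := by
          rw [intervalIntegral.integral_const_mul, integral_id]
          field_simp [hDsq.ne']
  -- FB bounds
  have hFB_bound : ∀ y : ℝ, 0 ≤ y → 0 ≤ FB y ∧ FB y ≤ M2 * y := by
    intro y hy
    constructor
    · rw [hFB y]
      refine mul_nonneg (by positivity) ?_
      refine intervalIntegral.integral_nonneg hD01.le fun r hr => ?_
      have hc := (hc_mem2 r hr).1
      have hr0 : 0 ≤ r := le_trans hD0 hr.1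
      have h0 : 0 ≤ 1 - Real.exp (-(1 + r ^ α) * y) := by
        rw [neg_mul]; exact aux_exp2 (mul_nonneg (by linarith) hy)
      exact mul_nonneg h0 hr0
    · rw [hFB y]
      have hint1 : IntervalIntegrable
          (fun r : ℝ => (1 - Real.exp (-(1 + r ^ α) * y)) * r) volume D0 D1 :=
        ((continuous_const.sub
          (Real.continuous_exp.comp (hcontc.neg.mul continuous_const))).mul
            continuous_id).intervalIntegrable _ _
      have hint2 : IntervalIntegrable (fun r : ℝ => (M2 * y) * r) volume D0 D1 :=
        (continuous_const.mul continuous_id).intervalIntegrable _ _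
      have hmono : (∫ r in D0..D1, (1 - Real.exp (-(1 + r ^ α) * y)) * r)
          ≤ ∫ r in D0..D1, (M2 * y) * r := by
        refine intervalIntegral.integral_mono_on hD01.le hint1 hint2 fun r hr => ?_
        obtain ⟨hc1, hc2⟩ := hc_mem2 r hr
        have hr0 : 0 ≤ r := le_trans hD0 hr.1
        have h1 : 1 - Real.exp (-(1 + r ^ α) * y) ≤ (1 + r ^ α) * y := by
          rw [neg_mul]; exact aux_exp1 _
        have h2 : (1 + r ^ α) * y ≤ M2 * y := mul_le_mul_of_nonneg_right hc2 hy
        exact mul_le_mul_of_nonneg_right (le_trans h1 h2) hr0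
      calc (2 / (D1 ^ 2 - D0 ^ 2)) *
            (∫ r in D0..D1, (1 - Real.exp (-(1 + r ^ α) * y)) * r)
          ≤ (2 / (D1 ^ 2 - D0 ^ 2)) * ∫ r in D0..D1, (M2 * y) * r :=
            mul_le_mul_of_nonneg_left hmono (by positivity)
        _ = M2 * y := by
            rw [intervalIntegral.integral_const_mul, integral_id]
            field_simp [hDsq.ne']
  -- notation for the limit
  set I : ℝ := ∫ r in (0:ℝ)..DF, (1 + r ^ α) ^ K * r with hIdef
  set L : ℝ := γF ^ K * ((2 / DF ^ 2) * I) with hLdef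
  have hIint : IntervalIntegrable (fun r : ℝ => (1 + r ^ α) ^ K * r) volume 0 DF :=
    ((hcontc.pow K).mul continuous_id).intervalIntegrable _ _
  -- the main limit term
  have hΦlim : Tendsto (fun P : ℝ => P ^ K * Φ (γF / P)) atTop (nhds L) := by
    have hup : ∀ᶠ P : ℝ in atTop, P ^ K * Φ (γF / P) ≤ L := by
      filter_upwards [eventually_gt_atTop (0:ℝ)] with P hP
      have hx : 0 < γF / P := by positivity
      have hint1 : IntervalIntegrable
          (fun r : ℝ => (1 - Real.exp (-(1 + r ^ α) * (γF / P))) ^ K * r) volume 0 DF :=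
        (((continuous_const.sub
          (Real.continuous_exp.comp (hcontc.neg.mul continuous_const))).pow K).mul
            continuous_id).intervalIntegrable _ _
      have hint2 : IntervalIntegrable
          (fun r : ℝ => (γF / P) ^ K * ((1 + r ^ α) ^ K * r)) volume 0 DF :=
        (continuous_const.mul ((hcontc.pow K).mul continuous_id)).intervalIntegrable _ _
      have hJ : (∫ r in (0:ℝ)..DF, (1 - Real.exp (-(1 + r ^ α) * (γF / P))) ^ K * r)
          ≤ (γF / P) ^ K * I := by
        rw [hIdef, ← intervalIntegral.integral_const_mul]
        refine intervalIntegral.integral_mono_on hDF.le hint1 hint2 fun r hr => ?_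
        obtain ⟨hc1, hc2⟩ := hc_mem1 r hr
        have hcx : 0 ≤ (1 + r ^ α) * (γF / P) := mul_nonneg (by linarith) hx.le
        have h0 : 0 ≤ 1 - Real.exp (-(1 + r ^ α) * (γF / P)) := by
          rw [neg_mul]; exact aux_exp2 hcx
        have h1 : 1 - Real.exp (-(1 + r ^ α) * (γF / P)) ≤ (1 + r ^ α) * (γF / P) := by
          rw [neg_mul]; exact aux_exp1 _
        have h2 := pow_le_pow_left₀ h0 h1 K
        calc (1 - Real.exp (-(1 + r ^ α) * (γF / P))) ^ K * r
            ≤ ((1 + r ^ α) * (γF / P)) ^ K * r := mul_le_mul_of_nonneg_right h2 hr.1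
          _ = (γF / P) ^ K * ((1 + r ^ α) ^ K * r) := by rw [mul_pow]; ring
      have hΦup : Φ (γF / P) ≤ (2 / DF ^ 2) * ((γF / P) ^ K * I) := by
        rw [hΦ]
        exact mul_le_mul_of_nonneg_left hJ (by positivity)
      calc P ^ K * Φ (γF / P) ≤ P ^ K * ((2 / DF ^ 2) * ((γF / P) ^ K * I)) :=
            mul_le_mul_of_nonneg_left hΦup (pow_nonneg hP.le K)
        _ = L := by
            rw [hLdef, div_pow]
            field_simp
    have hlo : ∀ᶠ P : ℝ in atTop,
        Real.exp (-(K * M1 * γF) / P) * L ≤ P ^ K * Φ (γF / P) := by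
      filter_upwards [eventually_gt_atTop (0:ℝ)] with P hP
      have hx : 0 < γF / P := by positivity
      have hint1 : IntervalIntegrable
          (fun r : ℝ => (1 - Real.exp (-(1 + r ^ α) * (γF / P))) ^ K * r) volume 0 DF :=
        (((continuous_const.sub
          (Real.continuous_exp.comp (hcontc.neg.mul continuous_const))).pow K).mul
            continuous_id).intervalIntegrable _ _
      have hint2 : IntervalIntegrable
          (fun r : ℝ => (Real.exp (-(K * M1 * γF) / P) * (γF / P) ^ K) *
            ((1 + r ^ α) ^ K * r)) volume 0 DF :=
        (continuous_const.mul ((hcontc.pow K).mul continuous_id)).intervalIntegrable _ _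
      have hJ : (Real.exp (-(K * M1 * γF) / P) * (γF / P) ^ K) * I
          ≤ ∫ r in (0:ℝ)..DF, (1 - Real.exp (-(1 + r ^ α) * (γF / P))) ^ K * r := by
        rw [hIdef, ← intervalIntegral.integral_const_mul]
        refine intervalIntegral.integral_mono_on hDF.le hint2 hint1 fun r hr => ?_
        obtain ⟨hc1, hc2⟩ := hc_mem1 r hr
        rw [neg_mul]
        set t : ℝ := (1 + r ^ α) * (γF / P) with htdef
        have ht0 : 0 ≤ t := mul_nonneg (by linarith) hx.le
        have h3 : t * Real.exp (-t) ≤ 1 - Real.exp (-t) := aux_exp3 t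
        have h4 : (t * Real.exp (-t)) ^ K ≤ (1 - Real.exp (-t)) ^ K :=
          pow_le_pow_left₀ (mul_nonneg ht0 (Real.exp_pos _).le) h3 K
        have h5 : (t * Real.exp (-t)) ^ K = t ^ K * Real.exp ((K : ℝ) * (-t)) := by
          rw [mul_pow, Real.exp_nat_mul]
        have h6 : Real.exp (-(K * M1 * γF) / P) ≤ Real.exp ((K : ℝ) * (-t)) := by
          apply Real.exp_le_exp.2
          have hc2' : t ≤ M1 * (γF / P) := by
            rw [htdef]; exact mul_le_mul_of_nonneg_right hc2 hx.le
          have hK0 : (0 : ℝ) ≤ (K : ℝ) := Nat.cast_nonneg K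
          have heq : -(K * M1 * γF) / P = (K : ℝ) * (-(M1 * (γF / P))) := by
            rw [mul_neg, neg_div, mul_div_assoc, mul_assoc]
          rw [heq]
          apply mul_le_mul_of_nonneg_left _ hK0
          linarith
        have h8 : Real.exp (-(K * M1 * γF) / P) * t ^ K ≤ (1 - Real.exp (-t)) ^ K := by
          calc Real.exp (-(K * M1 * γF) / P) * t ^ K
              ≤ Real.exp ((K : ℝ) * (-t)) * t ^ K :=
                mul_le_mul_of_nonneg_right h6 (pow_nonneg ht0 K)
            _ = (t * Real.exp (-t)) ^ K := by rw [h5]; ring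
            _ ≤ _ := h4
        have h9 : Real.exp (-(K * M1 * γF) / P) * t ^ K * r
            ≤ (1 - Real.exp (-t)) ^ K * r := mul_le_mul_of_nonneg_right h8 hr.1
        have ht : t ^ K = (1 + r ^ α) ^ K * (γF / P) ^ K := by rw [htdef, mul_pow]
        calc Real.exp (-(K * M1 * γF) / P) * (γF / P) ^ K * ((1 + r ^ α) ^ K * r)
            = Real.exp (-(K * M1 * γF) / P) * t ^ K * r := by rw [ht]; ring
          _ ≤ _ := h9
      have hΦlo : (2 / DF ^ 2) * ((Real.exp (-(K * M1 * γF) / P) * (γF / P) ^ K) * I)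
          ≤ Φ (γF / P) := by
        rw [hΦ]
        exact mul_le_mul_of_nonneg_left hJ (by positivity)
      have hΦlo' := mul_le_mul_of_nonneg_left hΦlo (pow_nonneg hP.le K)
      calc Real.exp (-(K * M1 * γF) / P) * L
          = P ^ K * ((2 / DF ^ 2) *
              ((Real.exp (-(K * M1 * γF) / P) * (γF / P) ^ K) * I)) := by
            rw [hLdef, div_pow]
            field_simp
        _ ≤ P ^ K * Φ (γF / P) := hΦlo'
    have hloT : Tendsto (fun P : ℝ => Real.exp (-(K * M1 * γF) / P) * L) atTop (nhds L) := by
      have h1 : Tendsto (fun P : ℝ => -(K * M1 * γF) / P) atTop (nhds 0) :=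
        tendsto_const_nhds.div_atTop tendsto_id
      have h2 := (Real.continuous_exp.tendsto 0).comp h1
      simpa [Function.comp] using h2.mul_const L
    exact tendsto_of_tendsto_of_tendsto_of_le_of_le' hloT tendsto_const_nhds hlo hup
  -- FB term
  have hc1pos : 0 < γB * (1 + γF) := mul_pos hγB hγF1
  have hFBlim : Tendsto (fun P : ℝ => 1 - FB (a1 P)) atTop (nhds 1) := by
    have h0 : Tendsto (fun P : ℝ => FB (a1 P)) atTop (nhds 0) := by
      refine squeeze_zero' ?_ ?_
        (tendsto_const_nhds.div_atTop tendsto_id :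
          Tendsto (fun P : ℝ => M2 * (γB * (1 + γF)) / P) atTop (nhds 0))
      · filter_upwards [eventually_gt_atTop (0:ℝ)] with P hP
        have hy : 0 ≤ a1 P := by rw [ha1]; positivity
        exact (hFB_bound _ hy).1
      · filter_upwards [eventually_gt_atTop (0:ℝ)] with P hP
        have hy : 0 ≤ a1 P := by rw [ha1]; positivity
        have h2 := (hFB_bound _ hy).2
        rw [ha1] at h2
        calc FB (a1 P) ≤ M2 * (γB * (1 + γF) / P) := by rw [ha1]; exact h2
          _ = M2 * (γB * (1 + γF)) / P := by ring
    simpa using h0.const_sub 1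
  -- constants
  set c1 : ℝ := γB * (1 + γF) with hc1def
  set c2 : ℝ := γB * (1 + γF) / (1 - γB * γF) with hc2def
  have hc2pos : 0 < c2 := div_pos hc1pos hs
  have hc1c2 : c1 ≤ c2 := by
    rw [hc1def, hc2def]
    rw [le_div_iff₀ hs]
    nlinarith [mul_nonneg (mul_pos hγB hγF1).le (mul_pos hγB hγF).le]
  -- first integral term
  have hT1 : Tendsto
      (fun P : ℝ => P ^ K * ∫ w in (0:ℝ)..(a2 P), fB w * Φ (γF * w + γF / P))
      atTop (nhds 0) := by
    refine squeeze_zero_norm' ?_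
      (tendsto_const_nhds.div_atTop tendsto_id :
        Tendsto (fun P : ℝ => (M2 * (M1 * (γF * (c2 + 1))) ^ K * c2) / P) atTop (nhds 0))
    filter_upwards [eventually_ge_atTop (1:ℝ)] with P hP
    have hPpos : 0 < P := lt_of_lt_of_le one_pos hP
    have ha2P : a2 P = c2 / P := by
      rw [ha2, hc2def, div_div, mul_comm (1 - γB * γF) P]
    have ha2pos : 0 < a2 P := by rw [ha2P]; positivity
    have hbound : ∀ w ∈ Set.uIoc (0:ℝ) (a2 P),
        ‖fB w * Φ (γF * w + γF / P)‖ ≤ M2 * (M1 * (γF * (c2 + 1) / P)) ^ K := by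
      intro w hw
      rw [Set.uIoc_of_le ha2pos.le] at hw
      have hw0 : 0 < w := hw.1
      have hwle : w ≤ c2 / P := ha2P ▸ hw.2
      have hu0 : 0 ≤ γF * w + γF / P :=
        add_nonneg (mul_nonneg hγF.le hw0.le) (by positivity)
      have huu : γF * w + γF / P ≤ γF * (c2 + 1) / P := by
        have h1 : γF * w ≤ γF * (c2 / P) := mul_le_mul_of_nonneg_left hwle hγF.le
        have h2 : γF * (c2 / P) + γF / P = γF * (c2 + 1) / P := by
          rw [mul_add, mul_one, add_div, mul_div_assoc]
        linarith
      have hΦu2 : Φ (γF * w + γF / P) ≤ (M1 * (γF * (c2 + 1) / P)) ^ K := by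
        refine le_trans (hΦ_le _ hu0) (pow_le_pow_left₀ (mul_nonneg hM1.le hu0) ?_ K)
        exact mul_le_mul_of_nonneg_left huu hM1.le
      have hΦ0 := hΦ_nonneg _ hu0
      rw [Real.norm_eq_abs, abs_of_nonneg (mul_nonneg (hfB_nonneg w) hΦ0)]
      exact mul_le_mul (hfB_le w hw0.le) hΦu2 hΦ0 hM2.le
    have hnorm := intervalIntegral.norm_integral_le_of_norm_le_const hbound
    calc ‖P ^ K * ∫ w in (0:ℝ)..(a2 P), fB w * Φ (γF * w + γF / P)‖
        = P ^ K * ‖∫ w in (0:ℝ)..(a2 P), fB w * Φ (γF * w + γF / P)‖ := by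
          rw [norm_mul, norm_pow, Real.norm_eq_abs, abs_of_pos hPpos]
      _ ≤ P ^ K * (M2 * (M1 * (γF * (c2 + 1) / P)) ^ K * |a2 P - 0|) :=
          mul_le_mul_of_nonneg_left hnorm (pow_nonneg hPpos.le K)
      _ = (M2 * (M1 * (γF * (c2 + 1))) ^ K * c2) / P := by
          rw [ha2P, sub_zero, abs_of_pos (by positivity)]
          rw [show M1 * (γF * (c2 + 1) / P) = M1 * (γF * (c2 + 1)) / P by ring, div_pow]
          field_simp
  -- second integral term
  have hT2 : Tendsto
      (fun P : ℝ => P ^ K * ∫ w in (a1 P)..(a2 P), fB w * Φ ((P * w - γB) / (P * γB)))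
      atTop (nhds 0) := by
    refine squeeze_zero_norm' ?_
      (tendsto_const_nhds.div_atTop tendsto_id :
        Tendsto (fun P : ℝ => (M2 * (M1 * (c2 / γB)) ^ K * c2) / P) atTop (nhds 0))
    filter_upwards [eventually_ge_atTop (1:ℝ)] with P hP
    have hPpos : 0 < P := lt_of_lt_of_le one_pos hP
    have ha1P : a1 P = c1 / P := by rw [ha1, hc1def]
    have ha2P : a2 P = c2 / P := by
      rw [ha2, hc2def, div_div, mul_comm (1 - γB * γF) P]
    have ha1pos : 0 < a1 P := by rw [ha1P]; positivity
    have ha12 : a1 P ≤ a2 P := by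
      rw [ha1P, ha2P]
      gcongr
    have hbound : ∀ w ∈ Set.uIoc (a1 P) (a2 P),
        ‖fB w * Φ ((P * w - γB) / (P * γB))‖ ≤ M2 * (M1 * (c2 / (γB * P))) ^ K := by
      intro w hw
      rw [Set.uIoc_of_le ha12] at hw
      have hw0 : 0 < w := lt_trans ha1pos hw.1
      have hPw1 : c1 < P * w := by
        have := hw.1
        rw [ha1P] at this
        calc c1 = P * (c1 / P) := by
              rw [mul_comm, div_mul_cancel₀ _ hPpos.ne']
          _ < P * w := by exact mul_lt_mul_of_pos_left this hPpos
      have hPw2 : P * w ≤ c2 := by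
        have := hw.2
        rw [ha2P] at this
        calc P * w ≤ P * (c2 / P) := mul_le_mul_of_nonneg_left this hPpos.le
          _ = c2 := by rw [mul_comm, div_mul_cancel₀ _ hPpos.ne']
      have hnum : 0 ≤ P * w - γB := by
        have : γB ≤ c1 := by rw [hc1def]; nlinarith
        linarith
      have hu0 : 0 ≤ (P * w - γB) / (P * γB) :=
        div_nonneg hnum (by positivity)
      have huu : (P * w - γB) / (P * γB) ≤ c2 / (γB * P) := by
        rw [div_le_div_iff₀ (by positivity) (by positivity)]
        nlinarith [mul_nonneg (mul_pos hγB hPpos).le (show (0:ℝ) ≤ c2 + γB - P * w by linarith)]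
      have hΦu2 : Φ ((P * w - γB) / (P * γB)) ≤ (M1 * (c2 / (γB * P))) ^ K := by
        refine le_trans (hΦ_le _ hu0) (pow_le_pow_left₀ (mul_nonneg hM1.le hu0) ?_ K)
        exact mul_le_mul_of_nonneg_left huu hM1.le
      have hΦ0 := hΦ_nonneg _ hu0
      rw [Real.norm_eq_abs, abs_of_nonneg (mul_nonneg (hfB_nonneg w) hΦ0)]
      exact mul_le_mul (hfB_le w hw0.le) hΦu2 hΦ0 hM2.le
    have hnorm := intervalIntegral.norm_integral_le_of_norm_le_const hbound
    have habs : |a2 P - a1 P| ≤ c2 / P := by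
      rw [abs_of_nonneg (sub_nonneg.2 ha12), ha1P, ha2P]
      have : 0 ≤ c1 / P := by positivity
      linarith
    calc ‖P ^ K * ∫ w in (a1 P)..(a2 P), fB w * Φ ((P * w - γB) / (P * γB))‖
        = P ^ K * ‖∫ w in (a1 P)..(a2 P), fB w * Φ ((P * w - γB) / (P * γB))‖ := by
          rw [norm_mul, norm_pow, Real.norm_eq_abs, abs_of_pos hPpos]
      _ ≤ P ^ K * (M2 * (M1 * (c2 / (γB * P))) ^ K * (c2 / P)) := by
          refine mul_le_mul_of_nonneg_left (le_trans hnorm ?_) (pow_nonneg hPpos.le K)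
          exact mul_le_mul_of_nonneg_left habs (by positivity)
      _ = (M2 * (M1 * (c2 / γB)) ^ K * c2) / P := by
          rw [show M1 * (c2 / (γB * P)) = M1 * (c2 / γB) / P by field_simp, div_pow]
          field_simp
  -- combine
  have hfinal := (hT1.sub hT2).add (hFBlim.mul hΦlim)
  have heq : (fun P : ℝ =>
      (P ^ K * ∫ w in (0:ℝ)..(a2 P), fB w * Φ (γF * w + γF / P)) -
        (P ^ K * ∫ w in (a1 P)..(a2 P), fB w * Φ ((P * w - γB) / (P * γB))) +
        (1 - FB (a1 P)) * (P ^ K * Φ (γF / P)))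
      =ᶠ[atTop] fun P : ℝ => P ^ K * Pout P := by
    filter_upwards [eventually_gt_atTop (0:ℝ)] with P hP
    rw [hPout P hP]
    ring
  have hres := hfinal.congr' heq
  have hlim : (0:ℝ) - 0 + 1 * L = L := by ring
  rw [← hlim]
  exact hres
end

section
/- Let α > 0, D_F > 0, 0 ≤ D_0 < D_1, and γ_B, γ_F > 0 with γ_B·γ_F > 1, and let K ≥ 1 be a natural number. Define Φ_K(x) = (2/D_F²)·∫_0^{D_F} (1 − exp(−(1+r^α)·x))^K·r dr, f_B(w) = (2/(D_1²−D_0²))·∫_{D_0}^{D_1} (1+r^α)·exp(−(1+r^α)·w)·r dr, and F_B(y) = (2/(D_1²−D_0²))·∫_{D_0}^{D_1} (1 − exp(−(1+r^α)·y))·r dr. For P > 0, set α_1(P) = γ_B·(1+γ_F)/P and define P_out(P) = ∫_0^{∞} f_B(w)·Φ_K(γ_F·w + γ_F/P) dw − ∫_{α_1(P)}^{∞} f_B(w)·Φ_K((P·w − γ_B)/(P·γ_B)) dw + (1 − F_B(α_1(P)))·Φ_K(γ_F/P). Then lim_{P→∞} P_out(P) = ∫_0^{∞} f_B(w)·( Φ_K(γ_F·w)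 − Φ_K(w/γ_B) ) dw, and this limit is strictly positive. -/
open Real Filter MeasureTheory Set Topology

private lemma cssgf_cont_rpow {α : ℝ} (hα : 0 < α) : Continuous fun r : ℝ => r ^ α :=
  continuous_iff_continuousAt.2 fun x => Real.continuousAt_rpow_const x α (Or.inr hα.le)

/-- Exact-integral version of the second half of Corollary 4: when `γB γF > 1`, the
fixed-power CS-SGF outage probability
`P_out(P) = ∫_0^∞ fB(w) Φ(γF w + γF/P) dw - ∫_{α1(P)}^∞ fB(w) Φ((P w - γB)/(P γB)) dw
 + (1 - FB(α1(P))) Φ(γF/P)`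
tends, as `P → ∞`, to the strictly positive error floor
`∫_0^∞ fB(w) (Φ(γF w) - Φ(w/γB)) dw`. -/
theorem cs_sgf_error_floor_large_rates (α DF D0 D1 γB γF : ℝ)
    (hα : 0 < α) (hDF : 0 < DF) (hD0 : 0 ≤ D0) (hD01 : D0 < D1)
    (hγB : 0 < γB) (hγF : 0 < γF) (hprod : 1 < γB * γF) (K : ℕ) (hK : 1 ≤ K)
    (Φ fB FB Pout : ℝ → ℝ) (a1 : ℝ → ℝ)
    (hΦ : ∀ x, Φ x = (2 / DF ^ 2) *
      ∫ r in (0:ℝ)..DF, (1 - Real.exp (-(1 + r ^ α) * x)) ^ K * r)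
    (hfB : ∀ w, fB w = (2 / (D1 ^ 2 - D0 ^ 2)) *
      ∫ r in D0..D1, (1 + r ^ α) * Real.exp (-(1 + r ^ α) * w) * r)
    (hFB : ∀ y, FB y = (2 / (D1 ^ 2 - D0 ^ 2)) *
      ∫ r in D0..D1, (1 - Real.exp (-(1 + r ^ α) * y)) * r)
    (ha1 : ∀ P, a1 P = γB * (1 + γF) / P)
    (hPout : ∀ P : ℝ, 0 < P → Pout P =
      (∫ w in Set.Ioi (0:ℝ), fB w * Φ (γF * w + γF / P)) -
        (∫ w in Set.Ioi (a1 P), fB w * Φ ((P * w - γB) / (P * γB))) +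
        (1 - FB (a1 P)) * Φ (γF / P)) :
    Filter.Tendsto Pout Filter.atTop
        (nhds (∫ w in Set.Ioi (0:ℝ), fB w * (Φ (γF * w) - Φ (w / γB)))) ∧
      0 < ∫ w in Set.Ioi (0:ℝ), fB w * (Φ (γF * w) - Φ (w / γB)) := by
  have hrp : Continuous fun r : ℝ => r ^ α := cssgf_cont_rpow hα
  have hc : Continuous fun r : ℝ => 1 + r ^ α := continuous_const.add hrp
  have hcpos : ∀ r : ℝ, 0 ≤ r → 0 < 1 + r ^ α := by
    intro r hr
    have := Real.rpow_nonneg hr α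
    linarith
  have hD1sq : D0 ^ 2 < D1 ^ 2 := by nlinarith
  have hCpos : (0:ℝ) < 2 / (D1 ^ 2 - D0 ^ 2) := by
    have : 0 < D1 ^ 2 - D0 ^ 2 := by linarith
    positivity
  have hKne : K ≠ 0 := by omega
  -- continuity of Φ
  have hΦcont : Continuous Φ := by
    have hunc : Continuous (Function.uncurry fun (x r : ℝ) =>
        (1 - Real.exp (-(1 + r ^ α) * x)) ^ K * r) := by
      apply Continuous.mul ?_ continuous_snd
      apply Continuous.pow
      exact continuous_const.sub
        (Real.continuous_exp.comp (((hc.comp continuous_snd).neg).mul continuous_fst))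
    have h2 : Continuous fun x : ℝ =>
        (2 / DF ^ 2) * ∫ r in (0:ℝ)..DF, (1 - Real.exp (-(1 + r ^ α) * x)) ^ K * r :=
      continuous_const.mul
        (intervalIntegral.continuous_parametric_intervalIntegral_of_continuous'
          (f := fun (x r : ℝ) => (1 - Real.exp (-(1 + r ^ α) * x)) ^ K * r)
          (μ := volume) hunc 0 DF)
    simpa only [← hΦ] using h2
  -- continuity of fB
  have hfBcont : Continuous fB := by
    have hunc : Continuous (Function.uncurry fun (w r : ℝ) =>
        (1 + r ^ α) * Real.exp (-(1 + r ^ α) * w) * r) := by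
      apply Continuous.mul ?_ continuous_snd
      exact (hc.comp continuous_snd).mul
        (Real.continuous_exp.comp (((hc.comp continuous_snd).neg).mul continuous_fst))
    have h2 : Continuous fun w : ℝ =>
        (2 / (D1 ^ 2 - D0 ^ 2)) * ∫ r in D0..D1, (1 + r ^ α) * Real.exp (-(1 + r ^ α) * w) * r :=
      continuous_const.mul
        (intervalIntegral.continuous_parametric_intervalIntegral_of_continuous'
          (f := fun (w r : ℝ) => (1 + r ^ α) * Real.exp (-(1 + r ^ α) * w) * r)
          (μ := volume) hunc D0 D1)
    simpa only [← hfB] using h2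
  -- continuity of FB
  have hFBcont : Continuous FB := by
    have hunc : Continuous (Function.uncurry fun (y r : ℝ) =>
        (1 - Real.exp (-(1 + r ^ α) * y)) * r) := by
      apply Continuous.mul ?_ continuous_snd
      exact continuous_const.sub
        (Real.continuous_exp.comp (((hc.comp continuous_snd).neg).mul continuous_fst))
    have h2 : Continuous fun y : ℝ =>
        (2 / (D1 ^ 2 - D0 ^ 2)) * ∫ r in D0..D1, (1 - Real.exp (-(1 + r ^ α) * y)) * r :=
      continuous_const.mul
        (intervalIntegral.continuous_parametric_intervalIntegral_of_continuous'
          (f := fun (y r : ℝ) => (1 - Real.exp (-(1 + r ^ α) * y)) * r)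
          (μ := volume) hunc D0 D1)
    simpa only [← hFB] using h2
  -- basic integrands are interval-integrable
  have hΦint : ∀ x : ℝ, IntervalIntegrable
      (fun r => (1 - Real.exp (-(1 + r ^ α) * x)) ^ K * r) volume 0 DF := by
    intro x
    exact ((continuous_const.sub
      (Real.continuous_exp.comp (hc.neg.mul continuous_const))).pow K).mul
      continuous_id |>.intervalIntegrable _ _
  -- Φ 0 = 0
  have hΦ0 : Φ 0 = 0 := by
    rw [hΦ]
    have h0 : (fun r : ℝ => (1 - Real.exp (-(1 + r ^ α) * 0)) ^ K * r) = fun _ => (0:ℝ) := by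
      funext r
      simp [zero_pow hKne]
    rw [h0]
    simp
  -- 0 ≤ Φ x ≤ 1 for x ≥ 0
  have hbase0 : ∀ (r x : ℝ), 0 ≤ r → 0 ≤ x → 0 ≤ 1 - Real.exp (-(1 + r ^ α) * x) := by
    intro r x hr hx
    have h1 : -(1 + r ^ α) * x ≤ 0 := by
      have := (hcpos r hr).le
      nlinarith
    have := Real.exp_le_one_iff.2 h1
    linarith
  have hbase1 : ∀ (r x : ℝ), 1 - Real.exp (-(1 + r ^ α) * x) ≤ 1 := by
    intro r x
    have := Real.exp_pos (-(1 + r ^ α) * x)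
    linarith
  have hΦnn : ∀ x : ℝ, 0 ≤ x → 0 ≤ Φ x := by
    intro x hx
    rw [hΦ]
    apply mul_nonneg (by positivity)
    apply intervalIntegral.integral_nonneg hDF.le
    intro r hr
    have hr0 : 0 ≤ r := hr.1
    exact mul_nonneg (pow_nonneg (hbase0 r x hr0 hx) K) hr0
  have hΦle1 : ∀ x : ℝ, 0 ≤ x → Φ x ≤ 1 := by
    intro x hx
    rw [hΦ]
    have hle : ∫ r in (0:ℝ)..DF, (1 - Real.exp (-(1 + r ^ α) * x)) ^ K * r
        ≤ ∫ r in (0:ℝ)..DF, r := by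
      apply intervalIntegral.integral_mono_on hDF.le (hΦint x)
        (continuous_id.intervalIntegrable _ _)
      intro r hr
      have hr0 : 0 ≤ r := hr.1
      have hb : (1 - Real.exp (-(1 + r ^ α) * x)) ^ K ≤ 1 :=
        pow_le_one₀ (hbase0 r x hr0 hx) (hbase1 r x)
      calc (1 - Real.exp (-(1 + r ^ α) * x)) ^ K * r ≤ 1 * r := by
            exact mul_le_mul_of_nonneg_right hb hr0
        _ = r := one_mul r
    have hid : ∫ r in (0:ℝ)..DF, r = DF ^ 2 / 2 := by
      rw [integral_id]; ring
    rw [hid] at hle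
    calc (2 / DF ^ 2) * ∫ r in (0:ℝ)..DF, (1 - Real.exp (-(1 + r ^ α) * x)) ^ K * r
        ≤ (2 / DF ^ 2) * (DF ^ 2 / 2) := by
          exact mul_le_mul_of_nonneg_left hle (by positivity)
      _ = 1 := by field_simp
  -- strict monotonicity of Φ on [0, ∞)
  have hΦlt : ∀ x y : ℝ, 0 ≤ x → x < y → Φ x < Φ y := by
    intro x y hx hxy
    have key : 0 < ∫ r in (0:ℝ)..DF,
        ((1 - Real.exp (-(1 + r ^ α) * y)) ^ K * r
          - (1 - Real.exp (-(1 + r ^ α) * x)) ^ K * r) := by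
      apply intervalIntegral.intervalIntegral_pos_of_pos_on
        ((hΦint y).sub (hΦint x)) _ hDF
      intro r hr
      obtain ⟨hr0, _⟩ := hr
      have hc0 : 0 < 1 + r ^ α := hcpos r hr0.le
      have hltexp : Real.exp (-(1 + r ^ α) * y) < Real.exp (-(1 + r ^ α) * x) := by
        apply Real.exp_lt_exp.2
        nlinarith
      have hblt : (1 - Real.exp (-(1 + r ^ α) * x)) ^ K
          < (1 - Real.exp (-(1 + r ^ α) * y)) ^ K := by
        apply pow_lt_pow_left₀ _ (hbase0 r x hr0.le hx) hKne
        linarith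
      nlinarith
    rw [intervalIntegral.integral_sub (hΦint y) (hΦint x)] at key
    have h2 : (0:ℝ) < 2 / DF ^ 2 := by positivity
    have := mul_pos h2 key
    rw [mul_sub, ← hΦ y, ← hΦ x, sub_pos] at this
    exact this
  -- fB is everywhere positive
  have hfBintgr : ∀ w : ℝ, IntervalIntegrable
      (fun r => (1 + r ^ α) * Real.exp (-(1 + r ^ α) * w) * r) volume D0 D1 := by
    intro w
    exact (hc.mul (Real.continuous_exp.comp (hc.neg.mul continuous_const))).mul
      continuous_id |>.intervalIntegrable _ _
  have hfBpos : ∀ w : ℝ, 0 < fB w := by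
    intro w
    rw [hfB]
    apply mul_pos hCpos
    apply intervalIntegral.intervalIntegral_pos_of_pos_on (hfBintgr w) _ hD01
    intro r hr
    have hr0 : 0 < r := lt_of_le_of_lt hD0 hr.1
    have := hcpos r hr0.le
    have := Real.exp_pos (-(1 + r ^ α) * w)
    positivity
  -- fB is integrable on Ioi 0
  set M : ℝ := (2 / (D1 ^ 2 - D0 ^ 2)) * ∫ r in D0..D1, (1 + r ^ α) * r with hM
  have hfBle : ∀ w : ℝ, 0 ≤ w → fB w ≤ M * Real.exp (-w) := by
    intro w hw
    rw [hfB, hM]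
    have hle : ∫ r in D0..D1, (1 + r ^ α) * Real.exp (-(1 + r ^ α) * w) * r
        ≤ ∫ r in D0..D1, ((1 + r ^ α) * r) * Real.exp (-w) := by
      apply intervalIntegral.integral_mono_on hD01.le (hfBintgr w)
        (((hc.mul continuous_id).mul continuous_const).intervalIntegrable _ _)
      intro r hr
      have hr0 : 0 ≤ r := hD0.trans hr.1
      have hc0 : 0 < 1 + r ^ α := hcpos r hr0
      have hexple : Real.exp (-(1 + r ^ α) * w) ≤ Real.exp (-w) := by
        apply Real.exp_le_exp.2
        nlinarith [Real.rpow_nonneg hr0 α]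
      calc (1 + r ^ α) * Real.exp (-(1 + r ^ α) * w) * r
          ≤ (1 + r ^ α) * Real.exp (-w) * r := by
            apply mul_le_mul_of_nonneg_right _ hr0
            exact mul_le_mul_of_nonneg_left hexple hc0.le
        _ = ((1 + r ^ α) * r) * Real.exp (-w) := by ring
    rw [intervalIntegral.integral_mul_const] at hle
    calc (2 / (D1 ^ 2 - D0 ^ 2)) * ∫ r in D0..D1, (1 + r ^ α) * Real.exp (-(1 + r ^ α) * w) * r
        ≤ (2 / (D1 ^ 2 - D0 ^ 2)) * ((∫ r in D0..D1, (1 + r ^ α) * r) * Real.exp (-w)) :=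
          mul_le_mul_of_nonneg_left hle hCpos.le
      _ = ((2 / (D1 ^ 2 - D0 ^ 2)) * ∫ r in D0..D1, (1 + r ^ α) * r) * Real.exp (-w) := by ring
  have hMexp : IntegrableOn (fun w : ℝ => M * Real.exp (-w)) (Ioi 0) := by
    have h1 : IntegrableOn (fun w : ℝ => Real.exp (-1 * w)) (Ioi 0) :=
      exp_neg_integrableOn_Ioi 0 one_pos
    simp only [neg_mul, one_mul] at h1
    exact h1.const_mul M
  have hfBint : IntegrableOn fB (Ioi 0) := by
    apply MeasureTheory.Integrable.mono hMexp (hfBcont.aestronglyMeasurable.restrict)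
    rw [ae_restrict_iff' measurableSet_Ioi]
    filter_upwards with w hw
    rw [Real.norm_eq_abs, Real.norm_eq_abs, abs_of_nonneg (hfBpos w).le]
    exact (hfBle w (le_of_lt hw)).trans (le_abs_self _)
  -- integrability of fB * (Φ ∘ g) for nice g
  have hIntMul : ∀ g : ℝ → ℝ, Continuous g → (∀ w, 0 < w → 0 ≤ g w) →
      IntegrableOn (fun w => fB w * Φ (g w)) (Ioi 0) := by
    intro g hg hg0
    apply MeasureTheory.Integrable.mono hfBint ((hfBcont.mul (hΦcont.comp hg)).aestronglyMeasurable.restrict)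
    rw [ae_restrict_iff' measurableSet_Ioi]
    filter_upwards with w hw
    simp only [Pi.mul_apply, Function.comp_apply]
    rw [Real.norm_eq_abs, Real.norm_eq_abs, abs_of_nonneg (hfBpos w).le, abs_mul,
      abs_of_nonneg (hfBpos w).le, abs_of_nonneg (hΦnn _ (hg0 w hw))]
    exact mul_le_of_le_one_right (hfBpos w).le (hΦle1 _ (hg0 w hw))
  have hi1 : IntegrableOn (fun w => fB w * Φ (γF * w)) (Ioi 0) :=
    hIntMul _ (continuous_const.mul continuous_id)
      (fun w hw => by positivity)
  have hi2 : IntegrableOn (fun w => fB w * Φ (w / γB)) (Ioi 0) :=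
    hIntMul _ (continuous_id.div_const γB) (fun w hw => by positivity)
  set L1 : ℝ := ∫ w in Ioi (0:ℝ), fB w * Φ (γF * w) with hL1
  set L2 : ℝ := ∫ w in Ioi (0:ℝ), fB w * Φ (w / γB) with hL2
  have hL : ∫ w in Ioi (0:ℝ), fB w * (Φ (γF * w) - Φ (w / γB)) = L1 - L2 := by
    rw [hL1, hL2, ← integral_sub hi1 hi2]
    congr 1
    ext w
    ring
  -- limits of auxiliary quantities
  have hdiv0 : ∀ c : ℝ, Tendsto (fun P : ℝ => c / P) atTop (𝓝 0) := by
    intro c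
    simpa [div_eq_mul_inv] using tendsto_inv_atTop_zero.const_mul c
  have hA0 : Tendsto a1 atTop (𝓝 0) := by
    have := hdiv0 (γB * (1 + γF))
    apply this.congr
    intro P
    rw [ha1]
  -- first integral
  have hA1 : Tendsto (fun P : ℝ => ∫ w in Ioi (0:ℝ), fB w * Φ (γF * w + γF / P))
      atTop (𝓝 L1) := by
    apply tendsto_integral_filter_of_dominated_convergence fB
    · filter_upwards with P
      exact ((hfBcont.mul (hΦcont.comp
        (continuous_const.mul continuous_id |>.add continuous_const))).aestronglyMeasurable).restrict
    · filter_upwards [eventually_gt_atTop (0:ℝ)] with P hP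
      rw [ae_restrict_iff' measurableSet_Ioi]
      filter_upwards with w hw
      have harg : 0 ≤ γF * w + γF / P := by
        have : (0:ℝ) < w := hw
        positivity
      rw [Real.norm_eq_abs, abs_mul, abs_of_nonneg (hfBpos w).le,
        abs_of_nonneg (hΦnn _ harg)]
      exact mul_le_of_le_one_right (hfBpos w).le (hΦle1 _ harg)
    · exact hfBint
    · rw [ae_restrict_iff' measurableSet_Ioi]
      filter_upwards with w hw
      have h1 : Tendsto (fun P : ℝ => γF * w + γF / P) atTop (𝓝 (γF * w + 0)) :=
        tendsto_const_nhds.add (hdiv0 γF)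
      rw [add_zero] at h1
      exact Tendsto.const_mul (fB w) ((hΦcont.tendsto _).comp h1)
  -- second integral (via indicators)
  have hargpos : ∀ P w : ℝ, 0 < P → w ∈ Ioi (a1 P) → 0 ≤ (P * w - γB) / (P * γB) := by
    intro P w hP hw
    rw [ha1] at hw
    have hw' : γB * (1 + γF) / P < w := hw
    have h1 : γB * (1 + γF) < P * w := by
      rw [div_lt_iff₀ hP] at hw'
      nlinarith
    apply div_nonneg _ (by positivity)
    nlinarith
  have hA2' : Tendsto (fun P : ℝ => ∫ w in Ioi (0:ℝ),
      (Ioi (a1 P)).indicator (fun w => fB w * Φ ((P * w - γB) / (P * γB))) w)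
      atTop (𝓝 L2) := by
    apply tendsto_integral_filter_of_dominated_convergence fB
    · filter_upwards with P
      exact (((hfBcont.mul (hΦcont.comp
        (((continuous_const.mul continuous_id).sub continuous_const).div_const
          _))).aestronglyMeasurable).indicator measurableSet_Ioi).restrict
    · filter_upwards [eventually_gt_atTop (0:ℝ)] with P hP
      rw [ae_restrict_iff' measurableSet_Ioi]
      filter_upwards with w hw
      by_cases hmem : w ∈ Ioi (a1 P)
      · rw [Set.indicator_of_mem hmem]
        have harg := hargpos P w hP hmem
        rw [Real.norm_eq_abs, abs_mul, abs_of_nonneg (hfBpos w).le,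
          abs_of_nonneg (hΦnn _ harg)]
        exact mul_le_of_le_one_right (hfBpos w).le (hΦle1 _ harg)
      · rw [Set.indicator_of_notMem hmem]
        simpa using (hfBpos w).le
    · exact hfBint
    · rw [ae_restrict_iff' measurableSet_Ioi]
      filter_upwards with w hw
      have harg : Tendsto (fun P : ℝ => (P * w - γB) / (P * γB)) atTop (𝓝 (w / γB)) := by
        have hbase : Tendsto (fun P : ℝ => w / γB - 1 / P) atTop (𝓝 (w / γB - 0)) :=
          tendsto_const_nhds.sub (hdiv0 1)
        rw [sub_zero] at hbase
        apply hbase.congr'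
        filter_upwards [eventually_gt_atTop (0:ℝ)] with P hP
        field_simp
      have ht : Tendsto (fun P : ℝ => fB w * Φ ((P * w - γB) / (P * γB))) atTop
          (𝓝 (fB w * Φ (w / γB))) :=
        Tendsto.const_mul (fB w) ((hΦcont.tendsto _).comp harg)
      apply ht.congr'
      filter_upwards [hA0.eventually_lt_const hw] with P hP
      exact (Set.indicator_of_mem (Set.mem_Ioi.mpr hP)
        (fun w => fB w * Φ ((P * w - γB) / (P * γB)))).symm
  have hEq2 : ∀ᶠ P : ℝ in atTop,
      (∫ w in Ioi (a1 P), fB w * Φ ((P * w - γB) / (P * γB))) =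
        ∫ w in Ioi (0:ℝ),
          (Ioi (a1 P)).indicator (fun w => fB w * Φ ((P * w - γB) / (P * γB))) w := by
    filter_upwards [eventually_gt_atTop (0:ℝ)] with P hP
    rw [setIntegral_indicator measurableSet_Ioi]
    congr 1
    rw [Set.Ioi_inter_Ioi]
    congr 1
    rw [ha1]
    have : (0:ℝ) ≤ γB * (1 + γF) / P := by positivity
    simp [this]
  have hA2 : Tendsto (fun P : ℝ => ∫ w in Ioi (a1 P), fB w * Φ ((P * w - γB) / (P * γB)))
      atTop (𝓝 L2) := by
    apply hA2'.congr'
    exact hEq2.mono fun P hP => hP.symm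
  -- third term
  have hA3 : Tendsto (fun P : ℝ => (1 - FB (a1 P)) * Φ (γF / P)) atTop (𝓝 0) := by
    have h1 : Tendsto (fun P : ℝ => FB (a1 P)) atTop (𝓝 (FB 0)) :=
      (hFBcont.tendsto 0).comp hA0
    have h2 : Tendsto (fun P : ℝ => Φ (γF / P)) atTop (𝓝 (Φ 0)) :=
      (hΦcont.tendsto 0).comp (hdiv0 γF)
    have h3 : Tendsto (fun P : ℝ => (1 - FB (a1 P)) * Φ (γF / P)) atTop
        (𝓝 ((1 - FB 0) * Φ 0)) :=
      ((tendsto_const_nhds (x := (1:ℝ))).sub h1).mul h2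
    rwa [hΦ0, mul_zero] at h3
  -- combine
  have hposw : ∀ w : ℝ, w ∈ Ioi (0:ℝ) → 0 < fB w * (Φ (γF * w) - Φ (w / γB)) := by
    intro w hw
    have hw0 : (0:ℝ) < w := hw
    apply mul_pos (hfBpos w)
    rw [sub_pos]
    apply hΦlt
    · positivity
    · rw [div_lt_iff₀ hγB]
      nlinarith
  constructor
  · have hmain : Tendsto (fun P : ℝ =>
        (∫ w in Ioi (0:ℝ), fB w * Φ (γF * w + γF / P)) -
          (∫ w in Ioi (a1 P), fB w * Φ ((P * w - γB) / (P * γB))) +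
          (1 - FB (a1 P)) * Φ (γF / P)) atTop (𝓝 (L1 - L2 + 0)) :=
      (hA1.sub hA2).add hA3
    rw [add_zero, ← hL] at hmain
    apply hmain.congr'
    filter_upwards [eventually_gt_atTop (0:ℝ)] with P hP
    exact (hPout P hP).symm
  · have hintall : IntegrableOn (fun w => fB w * (Φ (γF * w) - Φ (w / γB))) (Ioi 0) := by
      have : (fun w => fB w * (Φ (γF * w) - Φ (w / γB))) =
          fun w => fB w * Φ (γF * w) - fB w * Φ (w / γB) := by
        ext w; ring
      rw [this]
      exact hi1.sub hi2
    have hnn : 0 ≤ᵐ[volume.restrict (Ioi 0)]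
        fun w => fB w * (Φ (γF * w) - Φ (w / γB)) := by
      filter_upwards [ae_restrict_mem measurableSet_Ioi] with w hw
      exact (hposw w hw).le
    rw [setIntegral_pos_iff_support_of_nonneg_ae hnn hintall]
    have hsub : Ioi (0:ℝ) ⊆
        Function.support (fun w => fB w * (Φ (γF * w) - Φ (w / γB))) ∩ Ioi 0 :=
      fun w hw => ⟨(hposw w hw).ne', hw⟩
    refine lt_of_lt_of_le ?_ (measure_mono hsub)
    simp [Real.volume_Ioi]
end
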